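/- arXiv:1501.04101 — 6 statements merged into one kernel-verified Lean document; each statement's English description precedes it below -/
import Mathlib

section
/- For every real m with 0 < m < 1, one has (2 − m)·K(m) > 2·E(m). -/
open Real Filter

/-- Complete elliptic integral of the first kind, `K(m)`. -/
noncomputable def ellK (m : ℝ) : ℝ :=
  ∫ t in (0:ℝ)..(π/2), 1 / Real.sqrt (1 - m * Real.sin t ^ 2)

/-- Complete elliptic integral of the second kind, `E(m)`. -/
noncomputable def ellE (m : ℝ) : ℝ :=
  ∫ t in (0:ℝ)..(π/2), Real.sqrt (1 - m * Real.sin t ^ 2)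

/-- Complete elliptic integral of the third kind, `Π(n, m)`. -/
noncomputable def ellPi (n m : ℝ) : ℝ :=
  ∫ t in (0:ℝ)..(π/2), 1 / ((1 - n * Real.sin t ^ 2) * Real.sqrt (1 - m * Real.sin t ^ 2))

/-- The constant `μ(a,b)`. -/
noncomputable def muC (a b : ℝ) : ℝ :=
  Real.sqrt ((a + b + Real.sqrt (4 + (a - b) ^ 2)) / 2)

/-- The constant `ν(a,b)`. -/
noncomputable def nuC (a b : ℝ) : ℝ :=
  Real.sqrt ((a + b - Real.sqrt (4 + (a - b) ^ 2)) / 2)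

/-- First component `Φ₁` of the period map. -/
noncomputable def Phi1 (a b : ℝ) : ℝ :=
  muC a b * ellPi ((a - b) / (a - muC a b ^ 2)) ((a - b) / a) /
    (π * Real.sqrt a * (a - muC a b ^ 2))

/-- Second component `Φ₂` of the period map. -/
noncomputable def Phi2 (a b : ℝ) : ℝ :=
  nuC a b * ellPi ((a - b) / (a - nuC a b ^ 2)) ((a - b) / a) /
    (π * Real.sqrt a * (a - nuC a b ^ 2))

/-- The parameter domain `Σ = {(a,b) : a > b, ab > 1}`. -/
def SigmaSet : Set (ℝ × ℝ) := {p | p.1 > p.2 ∧ p.1 * p.2 > 1}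

/-- The domain `Ω̃ = {(x,y) : -1/√2 < x < -1/2, x² + y² < 1/2, y > 0}`. -/
def OmegaSet : Set (ℝ × ℝ) :=
  {p | -(1 / Real.sqrt 2) < p.1 ∧ p.1 < -(1/2) ∧ p.1 ^ 2 + p.2 ^ 2 < 1/2 ∧ p.2 > 0}

section Aux
open intervalIntegral
set_option maxHeartbeats 800000


lemma aux_pos (m : ℝ) (h0 : 0 < m) (h1 : m < 1) (t : ℝ) :
    0 < 1 - m * Real.sin t ^ 2 := by
  nlinarith [Real.sin_sq_le_one t, sq_nonneg (Real.sin t)]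

lemma contQ (m : ℝ) : Continuous fun t => 1 - m * Real.sin t ^ 2 :=
  continuous_const.sub (continuous_const.mul (Real.continuous_sin.pow 2))

lemma contF (m : ℝ) (h0 : 0 < m) (h1 : m < 1) :
    Continuous fun t => (2 * Real.sin t ^ 2 - 1) / Real.sqrt (1 - m * Real.sin t ^ 2) := by
  apply Continuous.div
    ((continuous_const.mul (Real.continuous_sin.pow 2)).sub continuous_const)
    (contQ m).sqrt
  intro t
  exact (Real.sqrt_pos.mpr (aux_pos m h0 h1 t)).ne'

lemma step1 (m q : ℝ) (hq : 0 < q) :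
    (2 - m) * (1/Real.sqrt q) - 2 * Real.sqrt q = (2 - m - 2*q)/Real.sqrt q := by
  have hs : 0 < Real.sqrt q := Real.sqrt_pos.mpr hq
  have hss : Real.sqrt q * Real.sqrt q = q := Real.mul_self_sqrt hq.le
  field_simp
  linear_combination (-2:ℝ) * hss

lemma ptwise (m s : ℝ) (hq : 0 < 1 - m * s) :
    (2 - m) * (1 / Real.sqrt (1 - m * s)) - 2 * Real.sqrt (1 - m * s)
      = m * ((2 * s - 1) / Real.sqrt (1 - m * s)) := by
  rw [step1 m (1 - m * s) hq, mul_div_assoc']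
  congr 1
  ring

theorem stmt_0' (m : ℝ) (h0 : 0 < m) (h1 : m < 1) :
    (2 - m) * (∫ t in (0:ℝ)..(π/2), 1 / Real.sqrt (1 - m * Real.sin t ^ 2))
      > 2 * ∫ t in (0:ℝ)..(π/2), Real.sqrt (1 - m * Real.sin t ^ 2) := by
  set F : ℝ → ℝ := fun t => (2 * Real.sin t ^ 2 - 1) / Real.sqrt (1 - m * Real.sin t ^ 2) with hF
  have hcF := contF m h0 h1
  have hcF2 : Continuous fun t => F (π/2 - t) :=
    hcF.comp (continuous_const.sub continuous_id)
  have hpi : (0:ℝ) < π/4 := by positivity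
  have h1' : (∫ t in (0:ℝ)..(π/2), F t)
      = (∫ t in (0:ℝ)..(π/4), F t) + ∫ t in (π/4:ℝ)..(π/2), F t := by
    rw [integral_add_adjacent_intervals (hcF.intervalIntegrable _ _) (hcF.intervalIntegrable _ _)]
  have h2' : (∫ t in (π/4:ℝ)..(π/2), F t) = ∫ t in (0:ℝ)..(π/4), F (π/2 - t) := by
    rw [integral_comp_sub_left F (π/2)]
    have e1 : π/2 - π/4 = π/4 := by ring
    have e2 : π/2 - (0:ℝ) = π/2 := by ring
    rw [e1, e2]
  have h3' : (∫ t in (0:ℝ)..(π/4), F t) + (∫ t in (0:ℝ)..(π/4), F (π/2 - t))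
      = ∫ t in (0:ℝ)..(π/4), (F t + F (π/2 - t)) := by
    rw [integral_add (hcF.intervalIntegrable _ _) (hcF2.intervalIntegrable _ _)]
  have hIpos : 0 < ∫ t in (0:ℝ)..(π/2), F t := by
    rw [h1', h2', h3']
    apply intervalIntegral_pos_of_pos_on
    · exact (hcF.add hcF2).intervalIntegrable _ _
    · intro t ht
      obtain ⟨ht0, ht4⟩ := ht
      have hsc : Real.sin t < Real.cos t := by
        have ha : Real.sin t < Real.sin (π/4) := by
          apply Real.strictMonoOn_sin ⟨by linarith [Real.pi_pos], by linarith [Real.pi_pos]⟩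
            ⟨by linarith [Real.pi_pos], by linarith [Real.pi_pos]⟩ ht4
        have hb : Real.cos (π/4) < Real.cos t := by
          apply Real.cos_lt_cos_of_nonneg_of_le_pi ht0.le (by linarith [Real.pi_pos]) ht4
        rw [Real.sin_pi_div_four] at ha
        rw [Real.cos_pi_div_four] at hb
        linarith
      have hs0 : 0 < Real.sin t := Real.sin_pos_of_pos_of_lt_pi ht0 (by linarith [Real.pi_pos])
      have hs2 : Real.sin t ^ 2 < 1/2 := by nlinarith [Real.sin_sq_add_cos_sq t]
      have hc2 : Real.cos t ^ 2 > 1/2 := by nlinarith [Real.sin_sq_add_cos_sq t]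
      have hA : 0 < 1 - m * Real.sin t ^ 2 := aux_pos m h0 h1 t
      have hB : 0 < 1 - m * Real.cos t ^ 2 := by nlinarith [Real.sin_sq_add_cos_sq t]
      have hBA : 1 - m * Real.cos t ^ 2 < 1 - m * Real.sin t ^ 2 := by nlinarith
      have hsqA : 0 < Real.sqrt (1 - m * Real.sin t ^ 2) := Real.sqrt_pos.mpr hA
      have hsqB : 0 < Real.sqrt (1 - m * Real.cos t ^ 2) := Real.sqrt_pos.mpr hB
      have hsq : Real.sqrt (1 - m * Real.cos t ^ 2) < Real.sqrt (1 - m * Real.sin t ^ 2) :=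
        Real.sqrt_lt_sqrt hB.le hBA
      have hF2 : F (π/2 - t) = (2 * Real.cos t ^ 2 - 1) / Real.sqrt (1 - m * Real.cos t ^ 2) := by
        simp [hF, Real.sin_pi_div_two_sub]
      show 0 < F t + F (π/2 - t)
      rw [hF2]
      show 0 < (2 * Real.sin t ^ 2 - 1) / Real.sqrt (1 - m * Real.sin t ^ 2)
          + (2 * Real.cos t ^ 2 - 1) / Real.sqrt (1 - m * Real.cos t ^ 2)
      have hcos : 2 * Real.cos t ^ 2 - 1 = -(2 * Real.sin t ^ 2 - 1) := by
        nlinarith [Real.sin_sq_add_cos_sq t]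
      rw [hcos]
      have hinv : 1 / Real.sqrt (1 - m * Real.sin t ^ 2)
          < 1 / Real.sqrt (1 - m * Real.cos t ^ 2) :=
        one_div_lt_one_div_of_lt hsqB hsq
      have hneg : 2 * Real.sin t ^ 2 - 1 < 0 := by linarith
      have e1 : (2 * Real.sin t ^ 2 - 1) / Real.sqrt (1 - m * Real.sin t ^ 2)
          + -(2 * Real.sin t ^ 2 - 1) / Real.sqrt (1 - m * Real.cos t ^ 2)
          = (2 * Real.sin t ^ 2 - 1) * (1 / Real.sqrt (1 - m * Real.sin t ^ 2)
            - 1 / Real.sqrt (1 - m * Real.cos t ^ 2)) := by ring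
      rw [e1]
      exact mul_pos_of_neg_of_neg hneg (by linarith)
    · linarith [Real.pi_pos]
  have hcg : Continuous fun t => Real.sqrt (1 - m * Real.sin t ^ 2) := (contQ m).sqrt
  have hcf : Continuous fun t => 1 / Real.sqrt (1 - m * Real.sin t ^ 2) := by
    apply Continuous.div continuous_const hcg
    intro t
    exact (Real.sqrt_pos.mpr (aux_pos m h0 h1 t)).ne'
  have key : (2 - m) * (∫ t in (0:ℝ)..(π/2), 1 / Real.sqrt (1 - m * Real.sin t ^ 2))
      - 2 * (∫ t in (0:ℝ)..(π/2), Real.sqrt (1 - m * Real.sin t ^ 2))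
      = m * ∫ t in (0:ℝ)..(π/2), F t := by
    rw [← integral_const_mul, ← integral_const_mul, ← integral_const_mul,
      ← integral_sub ((show Continuous fun t =>
          (2 - m) * (1 / Real.sqrt (1 - m * Real.sin t ^ 2)) from
            continuous_const.mul hcf).intervalIntegrable _ _)
        ((show Continuous fun t =>
          2 * Real.sqrt (1 - m * Real.sin t ^ 2) from
            continuous_const.mul hcg).intervalIntegrable _ _)]
    apply integral_congr
    intro t _
    show (2 - m) * (1 / Real.sqrt (1 - m * Real.sin t ^ 2))
        - 2 * Real.sqrt (1 - m * Real.sin t ^ 2) = m * F t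
    rw [hF]
    exact ptwise m (Real.sin t ^ 2) (aux_pos m h0 h1 t)
  have hmI : 0 < m * ∫ t in (0:ℝ)..(π/2), F t := mul_pos h0 hIpos
  linarith [key, hmI]

end Aux

/-- For every real `m` with `0 < m < 1`, one has `(2 - m)·K(m) > 2·E(m)`. -/

theorem stmt_0 (m : ℝ) (h0 : 0 < m) (h1 : m < 1) :
    (2 - m) * ellK m > 2 * ellE m := by
  unfold ellK ellE
  exact stmt_0' m h0 h1
end

section
/- The function m ↦ K(m)/E(m) − (2 + m)/2 is strictly increasing on the interval [0, 1). -/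
open Real Filter

lemma osb (m t : ℝ) : 1 - |m| ≤ 1 - m * Real.sin t ^ 2 := by
  nlinarith [mul_le_mul_of_nonneg_right (le_abs_self m) (sq_nonneg (Real.sin t)),
    mul_le_mul_of_nonneg_left (Real.sin_sq_le_one t) (abs_nonneg m)]

lemma osb_pos {m : ℝ} (hm : |m| < 1) (t : ℝ) : 0 < 1 - m * Real.sin t ^ 2 :=
  lt_of_lt_of_le (by linarith) (osb m t)

lemma hasDerivAt_inner (s x : ℝ) (hx : 1 - x * s ≠ 0) :
    HasDerivAt (fun m : ℝ => Real.sqrt (1 - m * s)) (-s / (2 * Real.sqrt (1 - x * s))) x := by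
  have h1 : HasDerivAt (fun m : ℝ => 1 - m * s) (-s) x := by
    simpa using ((hasDerivAt_id x).mul_const s).const_sub 1
  have h := (Real.hasDerivAt_sqrt hx).comp x h1
  rw [show -s / (2 * Real.sqrt (1 - x * s)) = 1 / (2 * Real.sqrt (1 - x * s)) * -s by ring]
  exact h

lemma hasDerivAt_innerInv (s x : ℝ) (hpos : 0 < 1 - x * s) :
    HasDerivAt (fun m : ℝ => 1 / Real.sqrt (1 - m * s))
      (s / (2 * Real.sqrt (1 - x * s) * (1 - x * s))) x := by
  have hs : 0 < Real.sqrt (1 - x * s) := Real.sqrt_pos.mpr hpos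
  have h := (hasDerivAt_inner s x hpos.ne').inv hs.ne'
  simp only [one_div]
  rw [Real.sq_sqrt hpos.le] at h
  rw [show s / (2 * Real.sqrt (1 - x * s) * (1 - x * s))
    = -(-s / (2 * Real.sqrt (1 - x * s))) / (1 - x * s) by rw [neg_div (2 * Real.sqrt (1 - x * s)) s, neg_neg, div_div]]
  exact h

lemma ball_bound {m : ℝ} (hm : |m| < 1) :
    ∀ x ∈ Metric.ball m ((1 - |m|) / 2), ∀ t : ℝ,
      (1 - |m|) / 2 ≤ 1 - x * Real.sin t ^ 2 := by
  intro x hx t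
  have h1 : |x| < |m| + (1 - |m|) / 2 := by
    have h2 := abs_sub_abs_le_abs_sub x m
    rw [Metric.mem_ball, Real.dist_eq] at hx
    linarith
  have h3 := osb x t
  linarith

lemma hasDerivAt_ellE {m : ℝ} (hm : |m| < 1) :
    HasDerivAt ellE (∫ t in (0:ℝ)..(π/2),
      -(Real.sin t ^ 2) / (2 * Real.sqrt (1 - m * Real.sin t ^ 2))) m := by
  have hε : 0 < (1 - |m|) / 2 := by linarith
  have hsε : 0 < Real.sqrt ((1 - |m|) / 2) := Real.sqrt_pos.mpr hε
  have H := intervalIntegral.hasDerivAt_integral_of_dominated_loc_of_deriv_le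
    (F := fun x t => Real.sqrt (1 - x * Real.sin t ^ 2))
    (F' := fun x t => -(Real.sin t ^ 2) / (2 * Real.sqrt (1 - x * Real.sin t ^ 2)))
    (a := 0) (b := π/2) (μ := MeasureTheory.volume) (x₀ := m)
    (bound := fun _ => 1 / (2 * Real.sqrt ((1 - |m|) / 2)))
    (Metric.ball_mem_nhds m hε)
    (Filter.Eventually.of_forall fun x =>
      (Continuous.aestronglyMeasurable (by fun_prop)))
    (Continuous.intervalIntegrable (by fun_prop) _ _)
    (Continuous.aestronglyMeasurable (by
      apply Continuous.div (by fun_prop) (by fun_prop)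
      intro t
      have := osb_pos hm t
      positivity))
    (Filter.Eventually.of_forall fun t _ x hx => by
      have hY : (1 - |m|) / 2 ≤ 1 - x * Real.sin t ^ 2 := ball_bound hm x hx t
      have hY0 : 0 < 1 - x * Real.sin t ^ 2 := lt_of_lt_of_le hε hY
      have hsY : 0 < Real.sqrt (1 - x * Real.sin t ^ 2) := Real.sqrt_pos.mpr hY0
      rw [Real.norm_eq_abs, abs_div, abs_neg, abs_of_nonneg (sq_nonneg (Real.sin t)),
        abs_of_pos (by linarith : (0:ℝ) < 2 * Real.sqrt (1 - x * Real.sin t ^ 2))]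
      exact div_le_div₀ (by norm_num) (Real.sin_sq_le_one t) (by linarith)
        (by have := Real.sqrt_le_sqrt hY; linarith))
    (intervalIntegrable_const)
    (Filter.Eventually.of_forall fun t _ x hx =>
      hasDerivAt_inner (Real.sin t ^ 2) x
        (lt_of_lt_of_le hε (ball_bound hm x hx t)).ne')
  exact H.2

lemma hasDerivAt_ellK {m : ℝ} (hm : |m| < 1) :
    HasDerivAt ellK (∫ t in (0:ℝ)..(π/2),
      Real.sin t ^ 2 / (2 * Real.sqrt (1 - m * Real.sin t ^ 2) *
        (1 - m * Real.sin t ^ 2))) m := by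
  have hε : 0 < (1 - |m|) / 2 := by linarith
  have hsε : 0 < Real.sqrt ((1 - |m|) / 2) := Real.sqrt_pos.mpr hε
  have H := intervalIntegral.hasDerivAt_integral_of_dominated_loc_of_deriv_le
    (F := fun x t => 1 / Real.sqrt (1 - x * Real.sin t ^ 2))
    (F' := fun x t => Real.sin t ^ 2 / (2 * Real.sqrt (1 - x * Real.sin t ^ 2) *
        (1 - x * Real.sin t ^ 2)))
    (a := 0) (b := π/2) (μ := MeasureTheory.volume) (x₀ := m)
    (bound := fun _ => 1 / (2 * Real.sqrt ((1 - |m|) / 2) * ((1 - |m|) / 2)))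
    (Metric.ball_mem_nhds m hε)
    ?_ ?_ ?_ ?_ (intervalIntegrable_const) ?_
  · exact H.2
  · filter_upwards [Metric.ball_mem_nhds m hε] with x hx
    apply Continuous.aestronglyMeasurable
    apply Continuous.div continuous_const (by fun_prop)
    intro t
    have := lt_of_lt_of_le hε (ball_bound hm x hx t)
    positivity
  · apply Continuous.intervalIntegrable
    apply Continuous.div continuous_const (by fun_prop)
    intro t
    have := osb_pos hm t
    positivity
  · apply Continuous.aestronglyMeasurable
    apply Continuous.div (by fun_prop) (by fun_prop)
    intro t
    have := osb_pos hm t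
    positivity
  · refine Filter.Eventually.of_forall fun t _ x hx => ?_
    have hY : (1 - |m|) / 2 ≤ 1 - x * Real.sin t ^ 2 := ball_bound hm x hx t
    have hY0 : 0 < 1 - x * Real.sin t ^ 2 := lt_of_lt_of_le hε hY
    have hsY : 0 < Real.sqrt (1 - x * Real.sin t ^ 2) := Real.sqrt_pos.mpr hY0
    have hmono : Real.sqrt ((1 - |m|) / 2) ≤ Real.sqrt (1 - x * Real.sin t ^ 2) :=
      Real.sqrt_le_sqrt hY
    rw [Real.norm_eq_abs, abs_div, abs_of_nonneg (sq_nonneg (Real.sin t)),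
      abs_of_pos (by positivity : (0:ℝ) < 2 * Real.sqrt (1 - x * Real.sin t ^ 2) *
        (1 - x * Real.sin t ^ 2))]
    apply div_le_div₀ (by norm_num) (Real.sin_sq_le_one t) (by positivity)
    apply mul_le_mul (by linarith) hY hε.le (by positivity)
  · refine Filter.Eventually.of_forall fun t _ x hx => ?_
    exact hasDerivAt_innerInv (Real.sin t ^ 2) x (lt_of_lt_of_le hε (ball_bound hm x hx t))

lemma ellE_pos {m : ℝ} (hm : |m| < 1) : 0 < ellE m := by
  refine intervalIntegral.intervalIntegral_pos_of_pos_on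
    (Continuous.intervalIntegrable (by fun_prop) _ _)
    (fun t _ => Real.sqrt_pos.mpr (osb_pos hm t)) (by positivity)

lemma ellE_le_ellK {m : ℝ} (hm0 : 0 ≤ m) (hm : |m| < 1) : ellE m ≤ ellK m := by
  apply intervalIntegral.integral_mono_on (by positivity)
    (Continuous.intervalIntegrable (by fun_prop) _ _)
    (Continuous.intervalIntegrable (Continuous.div continuous_const (by fun_prop)
      (fun t => by have := osb_pos hm t; positivity)) _ _)
  intro t _
  simp only [Pi.div_apply]
  have hX : 0 < 1 - m * Real.sin t ^ 2 := osb_pos hm t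
  have hX1 : 1 - m * Real.sin t ^ 2 ≤ 1 := by nlinarith [sq_nonneg (Real.sin t)]
  have h1 : Real.sqrt (1 - m * Real.sin t ^ 2) ≤ 1 := Real.sqrt_le_one.mpr hX1
  have h2 : 0 < Real.sqrt (1 - m * Real.sin t ^ 2) := Real.sqrt_pos.mpr hX
  rw [le_div_iff₀ h2]
  nlinarith

lemma deriv_ineq {m : ℝ} (hm0 : 0 < m) (hm1 : m < 1) :
    ellE m / 2 <
      (∫ t in (0:ℝ)..(π/2), Real.sin t ^ 2 /
          (2 * Real.sqrt (1 - m * Real.sin t ^ 2) * (1 - m * Real.sin t ^ 2)))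
      + (∫ t in (0:ℝ)..(π/2), Real.sin t ^ 2 /
          (2 * Real.sqrt (1 - m * Real.sin t ^ 2))) := by
  have hm : |m| < 1 := by rw [abs_of_pos hm0]; exact hm1
  have hne : ∀ t : ℝ, 0 < 1 - m * Real.sin t ^ 2 := osb_pos hm
  have cK : Continuous fun t : ℝ => Real.sin t ^ 2 /
      (2 * Real.sqrt (1 - m * Real.sin t ^ 2) * (1 - m * Real.sin t ^ 2)) := by
    apply Continuous.div (by fun_prop) (by fun_prop)
    intro t; have := hne t; positivity
  have cC : Continuous fun t : ℝ => Real.sin t ^ 2 /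
      (2 * Real.sqrt (1 - m * Real.sin t ^ 2)) := by
    apply Continuous.div (by fun_prop) (by fun_prop)
    intro t; have := hne t; positivity
  have cE : Continuous fun t : ℝ => Real.sqrt (1 - m * Real.sin t ^ 2) := by fun_prop
  have hzero : (∫ t in (0:ℝ)..(π/2), (Real.sin t ^ 2 - 1/2)) = 0 := by
    rw [intervalIntegral.integral_sub (Continuous.intervalIntegrable (by fun_prop) _ _)
      intervalIntegrable_const, integral_sin_sq, intervalIntegral.integral_const]
    simp
    ring
  have hpos : 0 < ∫ t in (0:ℝ)..(π/2),
      (Real.sin t ^ 2 / (2 * Real.sqrt (1 - m * Real.sin t ^ 2) * (1 - m * Real.sin t ^ 2))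
        + Real.sin t ^ 2 / (2 * Real.sqrt (1 - m * Real.sin t ^ 2))
        - Real.sqrt (1 - m * Real.sin t ^ 2) / 2
        - (Real.sin t ^ 2 - 1/2)) := by
    apply intervalIntegral.intervalIntegral_pos_of_pos_on
    · exact Continuous.intervalIntegrable (by
        exact ((cK.add cC).sub (cE.div_const 2)).sub (by fun_prop)) _ _
    · intro t ht
      have hs : 0 < Real.sin t := Real.sin_pos_of_pos_of_lt_pi ht.1
        (lt_trans ht.2 (by linarith [Real.pi_pos]))
      have hs2 : 0 < Real.sin t ^ 2 := by positivity
      have hX : 0 < 1 - m * Real.sin t ^ 2 := hne t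
      have hXlt : 1 - m * Real.sin t ^ 2 < 1 := by nlinarith
      have hv : 0 < Real.sqrt (1 - m * Real.sin t ^ 2) := Real.sqrt_pos.mpr hX
      have hv1 : Real.sqrt (1 - m * Real.sin t ^ 2) < 1 := by
        nlinarith [Real.sq_sqrt hX.le]
      have t1 : Real.sin t ^ 2 / 2 < Real.sin t ^ 2 /
          (2 * Real.sqrt (1 - m * Real.sin t ^ 2) * (1 - m * Real.sin t ^ 2)) := by
        apply div_lt_div_of_pos_left hs2 (by positivity)
        nlinarith
      have t2 : Real.sin t ^ 2 / 2 < Real.sin t ^ 2 /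
          (2 * Real.sqrt (1 - m * Real.sin t ^ 2)) := by
        apply div_lt_div_of_pos_left hs2 (by positivity)
        nlinarith
      have t3 : Real.sqrt (1 - m * Real.sin t ^ 2) / 2 < 1 / 2 := by linarith
      linarith
    · positivity
  have hsplit : (∫ t in (0:ℝ)..(π/2),
      (Real.sin t ^ 2 / (2 * Real.sqrt (1 - m * Real.sin t ^ 2) * (1 - m * Real.sin t ^ 2))
        + Real.sin t ^ 2 / (2 * Real.sqrt (1 - m * Real.sin t ^ 2))
        - Real.sqrt (1 - m * Real.sin t ^ 2) / 2
        - (Real.sin t ^ 2 - 1/2)))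
      = (∫ t in (0:ℝ)..(π/2), Real.sin t ^ 2 /
          (2 * Real.sqrt (1 - m * Real.sin t ^ 2) * (1 - m * Real.sin t ^ 2)))
        + (∫ t in (0:ℝ)..(π/2), Real.sin t ^ 2 /
          (2 * Real.sqrt (1 - m * Real.sin t ^ 2)))
        - ellE m / 2
        - (∫ t in (0:ℝ)..(π/2), (Real.sin t ^ 2 - 1/2)) := by
    rw [intervalIntegral.integral_sub
        (((cK.intervalIntegrable _ _).add (cC.intervalIntegrable _ _)).sub
          ((cE.div_const 2).intervalIntegrable _ _))
        (Continuous.intervalIntegrable (by fun_prop) _ _),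
      intervalIntegral.integral_sub
        ((cK.intervalIntegrable _ _).add (cC.intervalIntegrable _ _))
        ((cE.div_const 2).intervalIntegrable _ _),
      intervalIntegral.integral_add (cK.intervalIntegrable _ _) (cC.intervalIntegrable _ _),
      intervalIntegral.integral_div]
    rfl
  rw [hsplit, hzero] at hpos
  linarith

/-- The function `m ↦ K(m)/E(m) - (2 + m)/2` is strictly increasing on `[0, 1)`. -/
theorem stmt_2 :
    StrictMonoOn (fun m : ℝ => ellK m / ellE m - (2 + m) / 2) (Set.Ico 0 1) := by
  apply strictMonoOn_of_deriv_pos (convex_Ico 0 1)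
  · intro x hx
    have hm : |x| < 1 := by rw [abs_of_nonneg hx.1]; exact hx.2
    have hE := hasDerivAt_ellE hm
    have hK := hasDerivAt_ellK hm
    have hne : ellE x ≠ 0 := (ellE_pos hm).ne'
    have hlin : HasDerivAt (fun m : ℝ => (2 + m) / 2) (1/2) x := by
      simpa using ((hasDerivAt_id x).const_add 2).div_const 2
    exact ((hK.div hE hne).sub hlin).continuousAt.continuousWithinAt
  · intro x hx
    rw [interior_Ico] at hx
    have hm : |x| < 1 := by rw [abs_of_pos hx.1]; exact hx.2
    have hE := hasDerivAt_ellE hm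
    have hK := hasDerivAt_ellK hm
    have hEpos := ellE_pos hm
    have hne : ellE x ≠ 0 := hEpos.ne'
    have hlin : HasDerivAt (fun m : ℝ => (2 + m) / 2) (1/2) x := by
      simpa using ((hasDerivAt_id x).const_add 2).div_const 2
    have hf := (hK.div hE hne).sub hlin
    rw [HasDerivAt.deriv (f := fun m : ℝ => ellK m / ellE m - (2 + m) / 2) hf]
    have hED : (∫ t in (0:ℝ)..(π/2),
        -(Real.sin t ^ 2) / (2 * Real.sqrt (1 - x * Real.sin t ^ 2)))
        = -(∫ t in (0:ℝ)..(π/2),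
          Real.sin t ^ 2 / (2 * Real.sqrt (1 - x * Real.sin t ^ 2))) := by
      rw [← intervalIntegral.integral_neg]
      congr 1
      funext t
      rw [neg_div]
    rw [hED]
    have hineq := deriv_ineq hx.1 hx.2
    have hAB := ellE_le_ellK hx.1.le hm
    have hC : 0 ≤ ∫ t in (0:ℝ)..(π/2),
        Real.sin t ^ 2 / (2 * Real.sqrt (1 - x * Real.sin t ^ 2)) := by
      apply intervalIntegral.integral_nonneg (by positivity)
      intro t _
      have := Real.sqrt_nonneg (1 - x * Real.sin t ^ 2)
      positivity
    set KD := ∫ t in (0:ℝ)..(π/2), Real.sin t ^ 2 /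
      (2 * Real.sqrt (1 - x * Real.sin t ^ 2) * (1 - x * Real.sin t ^ 2)) with hKD
    set C := ∫ t in (0:ℝ)..(π/2),
      Real.sin t ^ 2 / (2 * Real.sqrt (1 - x * Real.sin t ^ 2)) with hCdef
    have key : ellE x ^ 2 / 2 < KD * ellE x - ellK x * (-C) := by
      nlinarith [mul_lt_mul_of_pos_right hineq hEpos,
        mul_le_mul_of_nonneg_left hAB hC]
    rw [sub_pos, lt_div_iff₀ (by positivity)]
    linarith
end

section
/- For every real a > 1, the partial derivative of Φ₁ with respect to the first variable, evaluated at the point (a, a), equals 1/(8·a^{3/2}·√(1 + a)). -/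
open Real Filter

open MeasureTheory intervalIntegral Topology

noncomputable def hA (a x : ℝ) : ℝ := (x + a + Real.sqrt (4 + (x - a) ^ 2)) / 2
noncomputable def hA' (a x : ℝ) : ℝ := (1 + (x - a) / Real.sqrt (4 + (x - a) ^ 2)) / 2
noncomputable def cA (a x t : ℝ) : ℝ := x * Real.cos t ^ 2 + a * Real.sin t ^ 2
noncomputable def gA (a x t : ℝ) : ℝ := ((cA a x t - hA a x) * Real.sqrt (cA a x t))⁻¹
noncomputable def gA' (a x t : ℝ) : ℝ :=
  -((Real.cos t ^ 2 - hA' a x) * Real.sqrt (cA a x t) +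
     (cA a x t - hA a x) * (Real.cos t ^ 2 / (2 * Real.sqrt (cA a x t)))) /
     ((cA a x t - hA a x) * Real.sqrt (cA a x t)) ^ 2

section auxLemmas

variable {a x t : ℝ}

lemma sqrt4_pos : 0 < Real.sqrt (4 + (x - a) ^ 2) :=
  Real.sqrt_pos.2 (by positivity)

lemma sqrt4_ge (hd : |x - a| ≤ 1) : |x - a| + 1 ≤ Real.sqrt (4 + (x - a) ^ 2) := by
  have h1 : Real.sqrt (4 + (x - a) ^ 2) ^ 2 = 4 + (x - a) ^ 2 :=
    Real.sq_sqrt (by positivity)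
  have h2 := Real.sqrt_nonneg (4 + (x - a) ^ 2)
  have h3 := abs_nonneg (x - a)
  have h4 : |x - a| ^ 2 = (x - a) ^ 2 := sq_abs _
  nlinarith [sq_nonneg (Real.sqrt (4 + (x - a) ^ 2) - (|x - a| + 1))]

lemma sqrt4_le (hd : |x - a| ≤ 1) : Real.sqrt (4 + (x - a) ^ 2) ≤ 3 := by
  have h4 : (x - a) ^ 2 ≤ 1 := by
    have := sq_abs (x - a); nlinarith [abs_nonneg (x - a)]
  calc Real.sqrt (4 + (x - a) ^ 2) ≤ Real.sqrt 9 := Real.sqrt_le_sqrt (by linarith)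
  _ = 3 := by rw [show (9:ℝ) = 3 ^ 2 by norm_num, Real.sqrt_sq (by norm_num)]

lemma hA_ge_x (hd : |x - a| ≤ 1) : x + 1/2 ≤ hA a x := by
  have h := sqrt4_ge (a := a) (x := x) hd
  have := abs_nonneg (x - a)
  have h2 : x - a ≤ |x - a| := le_abs_self _
  have h3 : -(x - a) ≤ |x - a| := neg_le_abs _
  unfold hA; linarith

lemma hA_ge_a (hd : |x - a| ≤ 1) : a + 1/2 ≤ hA a x := by
  have h := sqrt4_ge (a := a) (x := x) hd
  have h3 : -(x - a) ≤ |x - a| := neg_le_abs _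
  unfold hA; linarith

lemma hA_le (hd : |x - a| ≤ 1) : hA a x ≤ a + 2 := by
  have h := sqrt4_le (a := a) (x := x) hd
  have h2 : x - a ≤ |x - a| := le_abs_self _
  unfold hA; linarith

lemma cA_ge_one (ha : 1 < a) (hx : 1 < x) : 1 ≤ cA a x t := by
  have hs := Real.sin_sq_add_cos_sq t
  have h1 := sq_nonneg (Real.sin t); have h2 := sq_nonneg (Real.cos t)
  unfold cA; nlinarith

lemma cA_pos (ha : 1 < a) (hx : 1 < x) : 0 < cA a x t :=
  lt_of_lt_of_le one_pos (cA_ge_one ha hx)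

lemma cA_le (ha : 1 < a) (hx : 1 < x) (hd : |x - a| ≤ 1) : cA a x t ≤ a + 1 := by
  have hs := Real.sin_sq_add_cos_sq t
  have h1 := sq_nonneg (Real.sin t); have h2 := sq_nonneg (Real.cos t)
  have h3 : x ≤ a + 1 := by have := le_abs_self (x - a); linarith
  unfold cA; nlinarith

lemma cA_sub_hA (ha : 1 < a) (hx : 1 < x) (hd : |x - a| ≤ 1) :
    cA a x t - hA a x ≤ -(1/2) := by
  have h1 := hA_ge_x (a := a) hd
  have h2 := hA_ge_a (a := a) (x := x) hd
  have hs := Real.sin_sq_add_cos_sq t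
  have h3 := sq_nonneg (Real.sin t); have h4 := sq_nonneg (Real.cos t)
  unfold cA; nlinarith

lemma hA'_mem : 0 ≤ hA' a x ∧ hA' a x ≤ 1 := by
  have hs : 0 < Real.sqrt (4 + (x - a) ^ 2) := sqrt4_pos
  have h1 : |x - a| ≤ Real.sqrt (4 + (x - a) ^ 2) := by
    rw [← Real.sqrt_sq_eq_abs]
    exact Real.sqrt_le_sqrt (by nlinarith)
  have h2 : x - a ≤ |x - a| := le_abs_self _
  have h3 : -(x - a) ≤ |x - a| := neg_le_abs _
  have h4 : (x - a) / Real.sqrt (4 + (x - a) ^ 2) ≤ 1 :=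
    (div_le_one hs).2 (by linarith)
  have h5 : -1 ≤ (x - a) / Real.sqrt (4 + (x - a) ^ 2) := by
    rw [neg_le, ← neg_div]; exact (div_le_one hs).2 (by linarith)
  constructor <;> (unfold hA'; linarith)

lemma D_le (ha : 1 < a) (hx : 1 < x) (hd : |x - a| ≤ 1) :
    (cA a x t - hA a x) * Real.sqrt (cA a x t) ≤ -(1/2) := by
  have h1 := cA_sub_hA (t := t) ha hx hd
  have h2 : 1 ≤ Real.sqrt (cA a x t) := by
    rw [show (1:ℝ) = Real.sqrt 1 by simp]
    exact Real.sqrt_le_sqrt (cA_ge_one ha hx)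
  nlinarith

lemma D_ne (ha : 1 < a) (hx : 1 < x) (hd : |x - a| ≤ 1) :
    (cA a x t - hA a x) * Real.sqrt (cA a x t) ≠ 0 :=
  ne_of_lt (lt_of_le_of_lt (D_le ha hx hd) (by norm_num))

lemma gA'_bound (ha : 1 < a) (hx : 1 < x) (hd : |x - a| ≤ 1) :
    |gA' a x t| ≤ 4 * (Real.sqrt (a + 1) + (a + 2)) := by
  have hc1 := cA_ge_one (t := t) ha hx
  have hcle := cA_le (t := t) ha hx hd
  have hsc1 : 1 ≤ Real.sqrt (cA a x t) := by
    rw [show (1:ℝ) = Real.sqrt 1 by simp]; exact Real.sqrt_le_sqrt hc1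
  have hscle : Real.sqrt (cA a x t) ≤ Real.sqrt (a + 1) := Real.sqrt_le_sqrt hcle
  have hch := cA_sub_hA (t := t) ha hx hd
  have hhx := hA_ge_x (a := a) hd
  have hhle := hA_le (a := a) (x := x) hd
  have hcos1 : Real.cos t ^ 2 ≤ 1 := by
    nlinarith [Real.sin_sq_add_cos_sq t, sq_nonneg (Real.sin t)]
  have hcos0 := sq_nonneg (Real.cos t)
  have hh' := hA'_mem (a := a) (x := x)
  have hnum : |(Real.cos t ^ 2 - hA' a x) * Real.sqrt (cA a x t) +
      (cA a x t - hA a x) * (Real.cos t ^ 2 / (2 * Real.sqrt (cA a x t)))|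
      ≤ Real.sqrt (a + 1) + (a + 2) := by
    have e1 : |(Real.cos t ^ 2 - hA' a x) * Real.sqrt (cA a x t)| ≤ Real.sqrt (a + 1) := by
      rw [abs_mul]
      have : |Real.cos t ^ 2 - hA' a x| ≤ 1 := abs_le.2 ⟨by linarith [hh'.2], by linarith [hh'.1]⟩
      have h2 : |Real.sqrt (cA a x t)| = Real.sqrt (cA a x t) := abs_of_nonneg (by linarith)
      rw [h2]; nlinarith
    have e2 : |(cA a x t - hA a x) * (Real.cos t ^ 2 / (2 * Real.sqrt (cA a x t)))| ≤ a + 2 := by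
      rw [abs_mul]
      have h1 : |cA a x t - hA a x| ≤ a + 2 := by
        rw [abs_of_nonpos (by linarith)]; linarith
      have h2 : |Real.cos t ^ 2 / (2 * Real.sqrt (cA a x t))| ≤ 1 := by
        rw [abs_div]
        have h3 : |Real.cos t ^ 2| ≤ 1 := by rw [abs_of_nonneg hcos0]; exact hcos1
        have h4 : (1:ℝ) ≤ |2 * Real.sqrt (cA a x t)| := by
          rw [abs_of_nonneg (by linarith)]; linarith
        calc |Real.cos t ^ 2| / |2 * Real.sqrt (cA a x t)| ≤ 1 / 1 :=
          div_le_div₀ (by norm_num) h3 one_pos h4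
        _ = 1 := by norm_num
      have h5 : (0:ℝ) ≤ a + 2 := by linarith
      nlinarith [abs_nonneg (cA a x t - hA a x), abs_nonneg (Real.cos t ^ 2 / (2 * Real.sqrt (cA a x t)))]
    calc _ ≤ _ := abs_add_le _ _
    _ ≤ Real.sqrt (a + 1) + (a + 2) := add_le_add e1 e2
  have hden : (1:ℝ)/4 ≤ ((cA a x t - hA a x) * Real.sqrt (cA a x t)) ^ 2 := by
    have := D_le (t := t) ha hx hd
    nlinarith
  unfold gA'
  rw [abs_div, abs_neg, abs_of_nonneg (by positivity : (0:ℝ) ≤ ((cA a x t - hA a x) * Real.sqrt (cA a x t)) ^ 2)]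
  have hpos : (0:ℝ) < ((cA a x t - hA a x) * Real.sqrt (cA a x t)) ^ 2 := by linarith
  rw [div_le_iff₀ hpos]
  have hs0 : (0:ℝ) ≤ Real.sqrt (a + 1) := Real.sqrt_nonneg _
  nlinarith [abs_nonneg ((Real.cos t ^ 2 - hA' a x) * Real.sqrt (cA a x t) +
      (cA a x t - hA a x) * (Real.cos t ^ 2 / (2 * Real.sqrt (cA a x t))))]

lemma hasDerivAt_hA : HasDerivAt (fun y => hA a y) (hA' a x) x := by
  have hu : HasDerivAt (fun y => 4 + (y - a) ^ 2) (2 * (x - a)) x := by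
    have h := (((hasDerivAt_id x).sub_const a).pow 2).const_add 4
    refine h.congr_deriv ?_; simp only [id_eq]; push_cast; ring
  have hupos : (0:ℝ) < 4 + (x - a) ^ 2 := by positivity
  have hs : HasDerivAt (fun y => Real.sqrt (4 + (y - a) ^ 2))
      ((x - a) / Real.sqrt (4 + (x - a) ^ 2)) x := by
    have h := (Real.hasDerivAt_sqrt (ne_of_gt hupos)).comp x hu
    refine h.congr_deriv ?_
    have : Real.sqrt (4 + (x - a) ^ 2) ≠ 0 := by positivity
    field_simp
  exact (((hasDerivAt_id x).add_const a).add hs).div_const 2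

lemma hasDerivAt_cA : HasDerivAt (fun y => cA a y t) (Real.cos t ^ 2) x := by
  simpa [cA] using ((hasDerivAt_id x).mul_const (Real.cos t ^ 2)).add_const (a * Real.sin t ^ 2)

lemma hasDerivAt_gA (ha : 1 < a) (hx : 1 < x) (hd : |x - a| ≤ 1) :
    HasDerivAt (fun y => gA a y t) (gA' a x t) x := by
  have hc := hasDerivAt_cA (a := a) (x := x) (t := t)
  have hcpos := cA_pos (t := t) ha hx
  have hsc : HasDerivAt (fun y => Real.sqrt (cA a y t))
      (Real.cos t ^ 2 / (2 * Real.sqrt (cA a x t))) x := by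
    have h := (Real.hasDerivAt_sqrt (ne_of_gt hcpos)).comp x hc
    refine h.congr_deriv ?_
    have : Real.sqrt (cA a x t) ≠ 0 := by positivity
    field_simp
  have hD := (hc.sub (hasDerivAt_hA (a := a) (x := x))).mul hsc
  have h := hD.inv (D_ne ha hx hd)
  exact h

lemma cont_cA : Continuous (fun t => cA a x t) := by
  unfold cA; fun_prop

lemma cont_gA (ha : 1 < a) (hx : 1 < x) (hd : |x - a| ≤ 1) :
    Continuous (fun t => gA a x t) := by
  unfold gA
  exact (((cont_cA.sub continuous_const).mul (cont_cA.sqrt))).inv₀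
    (fun t => D_ne ha hx hd)

lemma cont_gA' (ha : 1 < a) (hx : 1 < x) (hd : |x - a| ≤ 1) :
    Continuous (fun t => gA' a x t) := by
  unfold gA'
  have h1 : Continuous fun t => (cA a x t - hA a x) * Real.sqrt (cA a x t) :=
    (cont_cA.sub continuous_const).mul cont_cA.sqrt
  have h2 : Continuous fun t => Real.cos t ^ 2 / (2 * Real.sqrt (cA a x t)) := by
    apply Continuous.div ((Real.continuous_cos.pow 2)) (continuous_const.mul cont_cA.sqrt)
    intro t
    have := cA_pos (t := t) ha hx
    exact mul_ne_zero two_ne_zero (Real.sqrt_pos.2 this).ne'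
  have hnum : Continuous fun t => (Real.cos t ^ 2 - hA' a x) * Real.sqrt (cA a x t) +
      (cA a x t - hA a x) * (Real.cos t ^ 2 / (2 * Real.sqrt (cA a x t))) :=
    (((Real.continuous_cos.pow 2).sub continuous_const).mul cont_cA.sqrt).add
      ((cont_cA.sub continuous_const).mul h2)
  exact hnum.neg.div (h1.pow 2) (fun t => pow_ne_zero 2 (D_ne ha hx hd))

lemma sqrt_four : Real.sqrt 4 = 2 := by
  rw [show (4:ℝ) = 2 ^ 2 by norm_num, Real.sqrt_sq (by norm_num)]

lemma hA_aa : hA a a = a + 1 := by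
  unfold hA; rw [sub_self]; norm_num [sqrt_four]; ring

lemma hA'_aa : hA' a a = 1/2 := by
  unfold hA'; rw [sub_self]; norm_num

lemma cA_aa : cA a a t = a := by
  unfold cA; linear_combination a * (Real.sin_sq_add_cos_sq t)

lemma gA_aa : gA a a t = -(Real.sqrt a)⁻¹ := by
  unfold gA; rw [cA_aa, hA_aa, show a - (a + 1) = -1 by ring]
  rw [neg_one_mul, inv_neg]

lemma gA'_aa (ha : 1 < a) : gA' a a t =
    Real.sqrt a / (2 * a) + (1 / (2 * a * Real.sqrt a) - Real.sqrt a / a) * Real.cos t ^ 2 := by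
  have hs : (0:ℝ) < Real.sqrt a := Real.sqrt_pos.2 (by linarith)
  have hs2 : Real.sqrt a ^ 2 = a := Real.sq_sqrt (by linarith)
  have ha0 : a ≠ 0 := by linarith
  unfold gA'; rw [cA_aa, hA_aa, hA'_aa, show a - (a + 1) = -1 by ring]
  field_simp
  try ring_nf
  try nlinarith [sq_nonneg (Real.cos t)]
  linear_combination (2 * Real.cos t ^ 2 * Real.sqrt a ^ 2 - Real.cos t ^ 2 - Real.sqrt a ^ 2) * hs2

lemma intI_a (ha : 1 < a) : ∫ t in (0:ℝ)..(π/2), gA a a t = -(π/2) * (Real.sqrt a)⁻¹ := by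
  simp only [gA_aa]
  rw [intervalIntegral.integral_const]
  simp
  try ring

lemma intI'_a (ha : 1 < a) :
    ∫ t in (0:ℝ)..(π/2), gA' a a t = π / (8 * (a * Real.sqrt a)) := by
  have hs : (0:ℝ) < Real.sqrt a := Real.sqrt_pos.2 (by linarith)
  have hs2 : Real.sqrt a ^ 2 = a := Real.sq_sqrt (by linarith)
  simp only [gA'_aa ha]
  rw [intervalIntegral.integral_add intervalIntegrable_const
      ((continuous_const.mul (Real.continuous_cos.pow 2)).intervalIntegrable _ _)
      (f := fun _ => Real.sqrt a / (2 * a))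
      (g := fun t => (1 / (2 * a * Real.sqrt a) - Real.sqrt a / a) * Real.cos t ^ 2),
    intervalIntegral.integral_const, intervalIntegral.integral_const_mul, integral_cos_sq]
  rw [Real.cos_pi_div_two, Real.sin_zero, Real.cos_zero, Real.sin_pi_div_two]
  have ha0 : a ≠ 0 := by linarith
  field_simp
  try ring_nf
  try nlinarith [Real.pi_pos]
  rw [mul_inv_cancel_right₀ ha0]; ring

lemma phi1_eq (ha : 1 < a) (hx : 1 < x) (hd : |x - a| ≤ 1) :
    Phi1 x a = Real.sqrt (hA a x) * (∫ t in (0:ℝ)..(π/2), gA a x t) / π := by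
  have hx0 : (0:ℝ) < x := by linarith
  have hmu : muC x a = Real.sqrt (hA a x) := rfl
  have hh0 : (0:ℝ) ≤ hA a x := by have := hA_ge_x (a := a) hd; linarith
  have hmusq : muC x a ^ 2 = hA a x := Real.sq_sqrt hh0
  have hxh : x - hA a x ≤ -(1/2) := by have := hA_ge_x (a := a) hd; linarith
  have hxhne : x - hA a x ≠ 0 := by
    intro h; rw [h] at hxh; norm_num at hxh
  have hsx : Real.sqrt x ≠ 0 := by positivity
  have hPi : ellPi ((x - a) / (x - hA a x)) ((x - a) / x)
      = (x - hA a x) * Real.sqrt x * ∫ t in (0:ℝ)..(π/2), gA a x t := by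
    unfold ellPi
    rw [← intervalIntegral.integral_const_mul]
    apply intervalIntegral.integral_congr
    intro t ht
    dsimp only
    have hc := cA_pos (t := t) ha hx
    have hch : cA a x t - hA a x ≠ 0 := by
      have := cA_sub_hA (t := t) ha hx hd
      intro h; rw [h] at this; norm_num at this
    have h1 : 1 - (x - a) / x * Real.sin t ^ 2 = cA a x t / x := by
      unfold cA; field_simp
      linear_combination (-x) * (Real.sin_sq_add_cos_sq t)
    have h2 : 1 - (x - a) / (x - hA a x) * Real.sin t ^ 2
        = (cA a x t - hA a x) / (x - hA a x) := by
      unfold cA; field_simp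
      linear_combination (-x) * (Real.sin_sq_add_cos_sq t)
    have hsc : Real.sqrt (cA a x t) ≠ 0 := by positivity
    rw [h1, h2, Real.sqrt_div hc.le]
    unfold gA
    field_simp
    try ring
  unfold Phi1
  rw [hmusq, hmu, hPi]
  have hpi : (π:ℝ) ≠ 0 := Real.pi_ne_zero
  field_simp

end auxLemmas

/-- For every real `a > 1`, the partial derivative of `Φ₁` with respect to the first
variable at `(a, a)` equals `1/(8·a^{3/2}·√(1 + a))`. -/
theorem stmt_5 (a : ℝ) (ha : 1 < a) :
    deriv (fun x => Phi1 x a) a = 1 / (8 * a ^ ((3:ℝ)/2) * Real.sqrt (1 + a)) := by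
  set ε : ℝ := min (a - 1) 1 with hε
  have εpos : 0 < ε := lt_min (by linarith) one_pos
  have hball : ∀ x ∈ Metric.ball a ε, 1 < x ∧ |x - a| ≤ 1 := by
    intro x hx
    rw [Metric.mem_ball, Real.dist_eq] at hx
    constructor
    · have h1 : |x - a| < a - 1 := lt_of_lt_of_le hx (min_le_left _ _)
      have := neg_abs_le (x - a); linarith
    · have h2 : |x - a| < 1 := lt_of_lt_of_le hx (min_le_right _ _)
      linarith
  have hself : (1:ℝ) < a ∧ |a - a| ≤ 1 := by simp; linarith
  have hI : HasDerivAt (fun x => ∫ t in (0:ℝ)..(π/2), gA a x t)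
      (∫ t in (0:ℝ)..(π/2), gA' a a t) a := by
    have H := intervalIntegral.hasDerivAt_integral_of_dominated_loc_of_deriv_le
      (F := fun x t => gA a x t) (F' := fun x t => gA' a x t)
      (bound := fun _ => 4 * (Real.sqrt (a + 1) + (a + 2)))
      (μ := MeasureTheory.volume) (a := (0:ℝ)) (b := π/2) (x₀ := a) (Metric.ball_mem_nhds a εpos)
      ?_ ?_ ?_ ?_ ?_ ?_
    · exact H.2
    · filter_upwards [Metric.ball_mem_nhds a εpos] with x hx
      exact (cont_gA ha (hball x hx).1 (hball x hx).2).aestronglyMeasurable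
    · exact (cont_gA ha hself.1 hself.2).intervalIntegrable _ _
    · exact (cont_gA' ha hself.1 hself.2).aestronglyMeasurable
    · refine Eventually.of_forall fun t => fun _ x hx => ?_
      rw [Real.norm_eq_abs]
      exact gA'_bound ha (hball x hx).1 (hball x hx).2
    · exact intervalIntegrable_const
    · exact Eventually.of_forall fun t => fun _ x hx =>
        hasDerivAt_gA ha (hball x hx).1 (hball x hx).2
  have hmu : HasDerivAt (fun x => Real.sqrt (hA a x)) (1 / (4 * Real.sqrt (a + 1))) a := by
    have hne : hA a a ≠ 0 := by rw [hA_aa]; positivity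
    have h := (Real.hasDerivAt_sqrt hne).comp a (hasDerivAt_hA (a := a) (x := a))
    refine h.congr_deriv ?_
    rw [hA_aa, hA'_aa]
    ring
  have htot := (hmu.mul hI).div_const π
  have hev : (fun x => Phi1 x a) =ᶠ[nhds a]
      fun x => Real.sqrt (hA a x) * (∫ t in (0:ℝ)..(π/2), gA a x t) / π := by
    filter_upwards [Metric.ball_mem_nhds a εpos] with x hx
    exact phi1_eq ha (hball x hx).1 (hball x hx).2
  rw [hev.deriv_eq, HasDerivAt.deriv (f := fun x => Real.sqrt (hA a x) * (∫ t in (0:ℝ)..(π/2), gA a x t) / π) htot]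
  rw [intI_a ha, intI'_a ha, hA_aa]
  have hsa : (0:ℝ) < Real.sqrt a := Real.sqrt_pos.2 (by linarith)
  have hsa2 : Real.sqrt a ^ 2 = a := Real.sq_sqrt (by linarith)
  have hsb : (0:ℝ) < Real.sqrt (a + 1) := Real.sqrt_pos.2 (by linarith)
  have hsb2 : Real.sqrt (a + 1) ^ 2 = a + 1 := Real.sq_sqrt (by linarith)
  have hpi : (0:ℝ) < π := Real.pi_pos
  have hrp : a ^ ((3:ℝ)/2) = a * Real.sqrt a := by
    rw [show (3:ℝ)/2 = 1 + 1/2 by norm_num, Real.rpow_add (by linarith), Real.rpow_one,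
      ← Real.sqrt_eq_rpow]
  rw [show (1:ℝ) + a = a + 1 from add_comm 1 a, hrp]
  rw [div_eq_div_iff (by positivity) (by positivity)]
  field_simp
  linear_combination (8:ℝ) * hsb2
end

section
/- As a → ∞, (1/π)·√(1 + a²)·Π(1 − a², (a² − 1)/a²) tends to 1/2; equivalently, Φ₁(a, 1/a) tends to −1/2 as a tends to +∞. -/
open Real Filter

open Topology MeasureTheory intervalIntegral Set

noncomputable def fP (a t : ℝ) : ℝ :=
  a * Real.sqrt (1 + a^2) /
    ((Real.cos t ^ 2 + a^2 * Real.sin t ^ 2) * Real.sqrt (a^2 * Real.cos t ^ 2 + Real.sin t ^ 2))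

noncomputable def gP (a φ : ℝ) : ℝ :=
  Real.sqrt ((1 + a^2) * (a^2 + Real.tan φ ^ 2) / (a^4 + Real.tan φ ^ 2))

lemma den1_pos {a : ℝ} (ha : 1 ≤ a) (t : ℝ) : 0 < Real.cos t ^ 2 + a^2 * Real.sin t ^ 2 := by
  have h1 : 1 ≤ a^2 := by nlinarith
  nlinarith [Real.sin_sq_add_cos_sq t, sq_nonneg (Real.sin t), sq_nonneg (Real.cos t)]

lemma den2_pos {a : ℝ} (ha : 1 ≤ a) (t : ℝ) : 0 < a^2 * Real.cos t ^ 2 + Real.sin t ^ 2 := by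
  have h1 : 1 ≤ a^2 := by nlinarith
  nlinarith [Real.sin_sq_add_cos_sq t, sq_nonneg (Real.sin t), sq_nonneg (Real.cos t)]

lemma fP_cont {a : ℝ} (ha : 1 ≤ a) : Continuous (fP a) := by
  unfold fP
  apply continuous_const.div
  · fun_prop
  · intro t
    have h1 := den1_pos ha t
    have h2 := den2_pos ha t
    positivity

lemma ellPi_eq {a : ℝ} (ha : 1 ≤ a) :
    Real.sqrt (1 + a^2) * ellPi (1 - a^2) ((a^2 - 1)/a^2) = ∫ t in (0:ℝ)..(π/2), fP a t := by
  have ha0 : (0:ℝ) < a := by linarith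
  rw [ellPi, ← intervalIntegral.integral_const_mul]
  apply intervalIntegral.integral_congr
  intro t _
  have hpy := Real.sin_sq_add_cos_sq t
  have e1 : 1 - (1 - a^2) * Real.sin t ^ 2 = Real.cos t ^ 2 + a^2 * Real.sin t ^ 2 := by nlinarith
  have e2 : 1 - (a^2 - 1)/a^2 * Real.sin t ^ 2
      = (a^2 * Real.cos t ^ 2 + Real.sin t ^ 2) / a^2 := by
    field_simp
    nlinarith
  have h2 := den2_pos ha t
  beta_reduce
  rw [e1, e2, fP, Real.sqrt_div h2.le, Real.sqrt_sq ha0.le]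
  have h1 := den1_pos ha t
  have hY : (0:ℝ) < Real.sqrt (a^2*Real.cos t^2+Real.sin t^2) := Real.sqrt_pos.2 h2
  field_simp

lemma point_eq {a : ℝ} (ha : 1 ≤ a) (x : ℝ) :
    (a * (1 + x^2) / (a^2 + x^2)) * fP a (Real.arctan (x/a))
      = Real.sqrt ((1 + a^2) * (a^2 + x^2) / (a^4 + x^2)) := by
  have ha0 : (0:ℝ) < a := lt_of_lt_of_le one_pos ha
  set y := x / a with hy
  have h1y : (0:ℝ) < 1 + y^2 := by positivity
  have hcos : Real.cos (Real.arctan y) ^ 2 = 1/(1+y^2) := by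
    rw [Real.cos_arctan, div_pow, one_pow, Real.sq_sqrt (by positivity)]
  have hsin : Real.sin (Real.arctan y) ^ 2 = y^2/(1+y^2) := by
    rw [Real.sin_arctan, div_pow, Real.sq_sqrt (by positivity)]
  have hy2 : y^2 = x^2/a^2 := by rw [hy]; ring
  rw [fP, hcos, hsin]
  have e1 : Real.cos (Real.arctan y)^2 + a^2 * Real.sin (Real.arctan y)^2
      = a^2*(1+x^2)/(a^2+x^2) := by
    rw [hcos, hsin, hy2]; field_simp
  have e2 : a^2 * (1/(1+y^2)) + y^2/(1+y^2) = (a^4+x^2)/(a^2+x^2) := by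
    rw [hy2]; field_simp
  rw [e2]
  have e3 : (1:ℝ)/(1+y^2) + a^2 * (y^2/(1+y^2)) = a^2*(1+x^2)/(a^2+x^2) := by
    rw [hy2]; field_simp
  rw [e3]
  have hD : (0:ℝ) < (a^4+x^2)/(a^2+x^2) := by positivity
  set L := a * (1 + x^2) / (a^2 + x^2) *
      (a * Real.sqrt (1 + a^2) / (a^2*(1+x^2)/(a^2+x^2) * Real.sqrt ((a^4+x^2)/(a^2+x^2)))) with hLdef
  have k1 : (Real.sqrt (1+a^2))^2 = 1+a^2 := Real.sq_sqrt (by positivity)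
  have k2 : (Real.sqrt ((a^4+x^2)/(a^2+x^2)))^2 = (a^4+x^2)/(a^2+x^2) := Real.sq_sqrt hD.le
  have hsD : (0:ℝ) < Real.sqrt ((a^4+x^2)/(a^2+x^2)) := Real.sqrt_pos.2 hD
  have hL2 : L^2 = (1 + a^2) * (a^2 + x^2) / (a^4 + x^2) := by
    rw [hLdef]
    simp only [mul_pow, div_pow]
    rw [k1, k2]
    field_simp
  have hL0 : (0:ℝ) ≤ L := by
    rw [hLdef]
    apply mul_nonneg (div_nonneg (mul_nonneg ha0.le (by positivity)) (by positivity))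
      (div_nonneg (mul_nonneg ha0.le (Real.sqrt_nonneg _)) (by positivity))
  calc L = Real.sqrt (L^2) := (Real.sqrt_sq hL0).symm
    _ = _ := by rw [hL2]

lemma subst_eq {a c : ℝ} (ha : 1 ≤ a) (hc : c ∈ Set.Ico 0 (π/2)) :
    ∫ t in (0:ℝ)..(Real.arctan (Real.tan c / a)), fP a t = ∫ φ in (0:ℝ)..c, gP a φ := by
  have ha0 : (0:ℝ) < a := lt_of_lt_of_le one_pos ha
  have hIcc : uIcc (0:ℝ) c = Icc 0 c := uIcc_of_le hc.1
  have hmem : ∀ φ ∈ uIcc (0:ℝ) c, Real.cos φ ≠ 0 := by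
    intro φ hφ
    rw [hIcc] at hφ
    exact (Real.cos_pos_of_mem_Ioo ⟨by nlinarith [Real.pi_pos, hφ.1],
      lt_of_le_of_lt hφ.2 hc.2⟩).ne'
  have hsub : ∀ φ ∈ uIcc (0:ℝ) c, HasDerivAt (fun ψ => Real.arctan (Real.tan ψ / a))
      (a * (1 + Real.tan φ ^ 2) / (a^2 + Real.tan φ ^ 2)) φ := by
    intro φ hφ
    have hcos := hmem φ hφ
    have h1 : HasDerivAt (fun ψ => Real.tan ψ / a) (1 / Real.cos φ ^ 2 / a) φ :=
      (Real.hasDerivAt_tan hcos).div_const a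
    have h2 := (Real.hasDerivAt_arctan (Real.tan φ / a)).comp φ h1
    refine h2.congr_deriv ?_
    have ht : 1 / Real.cos φ ^ 2 = 1 + Real.tan φ ^ 2 := by
      rw [Real.tan_eq_sin_div_cos, div_pow]
      field_simp
      linarith [Real.sin_sq_add_cos_sq φ]
    rw [← ht]
    have hc2 : Real.cos φ ^ 2 > 0 := by positivity
    field_simp
  have hcont' : ContinuousOn (fun φ => a * (1 + Real.tan φ ^ 2) / (a^2 + Real.tan φ ^ 2))
      (uIcc (0:ℝ) c) := by
    have htan : ContinuousOn Real.tan (uIcc (0:ℝ) c) :=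
      Real.continuousOn_tan.mono (fun φ hφ => hmem φ hφ)
    exact ((continuousOn_const.mul (continuousOn_const.add ((htan.pow 2)))).div
      (continuousOn_const.add (htan.pow 2))
      (fun φ hφ => by positivity))
  have key := intervalIntegral.integral_comp_smul_deriv hsub hcont' (fP_cont ha)
  simp only [Real.tan_zero, zero_div, Real.arctan_zero] at key
  rw [← key]
  apply intervalIntegral.integral_congr
  intro φ hφ
  have := point_eq ha (Real.tan φ)
  simpa [gP, smul_eq_mul, Function.comp] using this

lemma gP_nonneg (a φ : ℝ) : 0 ≤ gP a φ := Real.sqrt_nonneg _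

lemma gP_le {a φ : ℝ} (ha : 1 ≤ a) (hs : 0 ≤ Real.tan φ) :
    gP a φ ≤ Real.sqrt (2 + Real.tan φ) := by
  have ha2 : (1:ℝ) ≤ a^2 := by nlinarith
  set s := Real.tan φ
  apply Real.sqrt_le_sqrt
  rw [div_le_iff₀ (by positivity)]
  nlinarith [mul_nonneg hs (sq_nonneg (a^2 - s)), sq_nonneg s, sq_nonneg (a^2-1)]

lemma tan_nonneg_Icc {φ : ℝ} (h : φ ∈ Icc 0 (π/2)) : 0 ≤ Real.tan φ :=
  Real.tan_nonneg_of_nonneg_of_le_pi_div_two h.1 h.2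

-- the dominating function is interval integrable
lemma bound_int : IntervalIntegrable (fun φ => Real.sqrt (2 + Real.tan φ)) volume 0 (π/2) := by
  have hπ : (0:ℝ) < π/2 := by positivity
  -- H φ = √2 + √(π/2) * (π/2 - φ) ^ (-(1/2) : ℝ)
  have hrint : IntervalIntegrable (fun x : ℝ => x ^ (-(1/2) : ℝ)) volume 0 (π/2) :=
    intervalIntegrable_rpow' (by norm_num)
  have hrefl : IntervalIntegrable (fun x : ℝ => (π/2 - x) ^ (-(1/2) : ℝ)) volume 0 (π/2) := by
    have := hrint.comp_sub_left (π/2)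
    simpa using this.symm
  have hH : IntervalIntegrable
      (fun φ : ℝ => Real.sqrt 2 + Real.sqrt (π/2) * (π/2 - φ) ^ (-(1/2) : ℝ)) volume 0 (π/2) :=
    (_root_.intervalIntegrable_const).add (hrefl.const_mul _)
  have mtan : Measurable Real.tan := by
    rw [show Real.tan = fun x => Real.sin x / Real.cos x from funext Real.tan_eq_sin_div_cos]
    exact Real.measurable_sin.div Real.measurable_cos
  apply hH.mono_fun ((measurable_const.add mtan).sqrt.aestronglyMeasurable)
  rw [Filter.EventuallyLE, ae_restrict_iff' measurableSet_uIoc]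
  apply Filter.Eventually.of_forall
  intro φ hφ
  rw [Set.uIoc_of_le hπ.le] at hφ
  have htn : 0 ≤ Real.tan φ := tan_nonneg_Icc ⟨hφ.1.le, hφ.2⟩
  have hsub : 0 ≤ π/2 - φ := by linarith [hφ.2]
  have sqrt_add_le' : ∀ {x y : ℝ}, 0 ≤ x → 0 ≤ y →
      Real.sqrt (x+y) ≤ Real.sqrt x + Real.sqrt y := by
    intro x y hx hy
    have h := Real.sqrt_le_sqrt (show x+y ≤ (Real.sqrt x + Real.sqrt y)^2 by
      nlinarith [Real.sq_sqrt hx, Real.sq_sqrt hy, mul_nonneg (Real.sqrt_nonneg x) (Real.sqrt_nonneg y)])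
    rwa [Real.sqrt_sq (by positivity)] at h
  rw [Real.norm_of_nonneg (Real.sqrt_nonneg _), Real.norm_of_nonneg (by positivity)]
  rcases eq_or_lt_of_le hφ.2 with heq | hlt
  · rw [heq, Pi.add_apply, Real.tan_pi_div_two, sub_self, Real.zero_rpow (by norm_num), add_zero, mul_zero,
      add_zero]
  · have hsub2 : 0 < π/2 - φ := by linarith
    have hcosb : 2/π * (π/2 - φ) ≤ Real.cos φ := by
      have := Real.mul_le_sin (x := π/2 - φ) hsub (by linarith [hφ.1])
      rwa [Real.sin_pi_div_two_sub] at this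
    have hcos2 : 0 < Real.cos φ := lt_of_lt_of_le (by positivity) hcosb
    have htle : Real.tan φ ≤ π/2 * (π/2 - φ)⁻¹ := by
      rw [Real.tan_eq_sin_div_cos, div_le_iff₀ hcos2]
      have h2 : π/2 * (π/2 - φ)⁻¹ * (2/π * (π/2 - φ)) = 1 := by
        field_simp
        rw [div_eq_one_iff_eq (ne_of_gt (by nlinarith [Real.pi_pos]))]
      calc Real.sin φ ≤ 1 := Real.sin_le_one φ
        _ = π/2 * (π/2 - φ)⁻¹ * (2/π * (π/2 - φ)) := h2.symm
        _ ≤ π/2 * (π/2 - φ)⁻¹ * Real.cos φ := by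
            apply mul_le_mul_of_nonneg_left hcosb (by positivity)
    have hrw : (π/2 - φ) ^ (-(1/2) : ℝ) = Real.sqrt ((π/2 - φ)⁻¹) := by
      rw [show (-(1/2) : ℝ) = -(1/2 : ℝ) from rfl, Real.rpow_neg hsub, ← Real.sqrt_eq_rpow,
        Real.sqrt_inv]
    rw [hrw]
    calc Real.sqrt (2 + Real.tan φ) ≤ Real.sqrt (2 + π/2 * (π/2 - φ)⁻¹) := by
          apply Real.sqrt_le_sqrt; linarith
      _ ≤ Real.sqrt 2 + Real.sqrt (π/2 * (π/2 - φ)⁻¹) := sqrt_add_le' (by norm_num) (by positivity)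
      _ = Real.sqrt 2 + Real.sqrt (π/2) * Real.sqrt ((π/2 - φ)⁻¹) := by
          rw [Real.sqrt_mul (by positivity)]

lemma gP_tendsto (φ : ℝ) : Tendsto (fun a : ℝ => gP a φ) atTop (𝓝 1) := by
  set s := Real.tan φ
  have h1 : Tendsto (fun a : ℝ => 1 + (1 + s^2)/a^2) atTop (𝓝 1) := by
    have : Tendsto (fun a : ℝ => (1 + s^2)/a^2) atTop (𝓝 0) := by
      apply Tendsto.div_atTop tendsto_const_nhds
      exact tendsto_pow_atTop (by norm_num)
    simpa using tendsto_const_nhds.add this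
  have hg : Tendsto (fun a : ℝ => (1 + a^2) * (a^2 + s^2) / (a^4 + s^2)) atTop (𝓝 1) := by
    apply tendsto_of_tendsto_of_tendsto_of_le_of_le' tendsto_const_nhds h1
    · filter_upwards [eventually_ge_atTop (1:ℝ)] with a ha
      have h4 : (0:ℝ) < a^4 + s^2 := by positivity
      rw [le_div_iff₀ h4]
      nlinarith [sq_nonneg s, sq_nonneg a]
    · filter_upwards [eventually_ge_atTop (1:ℝ)] with a ha
      have h4 : (0:ℝ) < a^4 + s^2 := by positivity
      have h2 : (0:ℝ) < a^2 := by positivity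
      have expand : (1 + (1 + s^2)/a^2) = (a^2 + 1 + s^2)/a^2 := by
        field_simp
        ring
      rw [expand, div_le_div_iff₀ h4 h2]
      nlinarith [sq_nonneg s, sq_nonneg (s^2), sq_nonneg (a*s)]
  have := (Real.continuous_sqrt.tendsto 1).comp hg
  simpa [gP, s, Function.comp_def] using this

lemma gP_meas (a : ℝ) : AEStronglyMeasurable (gP a) (volume.restrict (Set.uIoc (0:ℝ) (π/2))) := by
  have mtan : Measurable Real.tan := by
    rw [show Real.tan = fun x => Real.sin x / Real.cos x from funext Real.tan_eq_sin_div_cos]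
    exact Real.measurable_sin.div Real.measurable_cos
  exact (((measurable_const.mul (measurable_const.add (mtan.pow_const 2))).div
    (measurable_const.add (mtan.pow_const 2))).sqrt).aestronglyMeasurable

lemma gP_integral_tendsto :
    Tendsto (fun a : ℝ => ∫ φ in (0:ℝ)..(π/2), gP a φ) atTop (𝓝 (π/2)) := by
  have hπ : (0:ℝ) < π/2 := by positivity
  have h := intervalIntegral.tendsto_integral_filter_of_dominated_convergence
    (μ := volume) (a := (0:ℝ)) (b := π/2) (F := fun a φ => gP a φ) (f := fun _ => (1:ℝ))
    (l := atTop) (fun φ => Real.sqrt (2 + Real.tan φ))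
    (Filter.Eventually.of_forall gP_meas)
    ?_ bound_int ?_
  · simpa using h
  · filter_upwards [eventually_ge_atTop (1:ℝ)] with a ha
    apply Filter.Eventually.of_forall
    intro φ hφ
    rw [Set.uIoc_of_le hπ.le] at hφ
    have htn : 0 ≤ Real.tan φ := tan_nonneg_Icc ⟨hφ.1.le, hφ.2⟩
    rw [Real.norm_of_nonneg (gP_nonneg a φ)]
    exact gP_le ha htn
  · exact Filter.Eventually.of_forall fun φ _ => gP_tendsto φ

lemma gP_integrableOn {a : ℝ} (ha : 1 ≤ a) : IntegrableOn (gP a) (uIcc (0:ℝ) (π/2)) volume := by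
  have hπ : (0:ℝ) < π/2 := by positivity
  rw [uIcc_of_le hπ.le, integrableOn_Icc_iff_integrableOn_Ioc]
  have hb : IntegrableOn (fun φ => Real.sqrt (2 + Real.tan φ)) (Ioc (0:ℝ) (π/2)) volume := by
    have := bound_int.1
    simpa using this
  apply hb.mono' ((gP_meas a).mono_measure (by rw [Set.uIoc_of_le hπ.le]))
  rw [ae_restrict_iff' measurableSet_Ioc]
  apply Filter.Eventually.of_forall
  intro φ hφ
  rw [Real.norm_of_nonneg (gP_nonneg a φ)]
  exact gP_le ha (tan_nonneg_Icc ⟨hφ.1.le, hφ.2⟩)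

lemma int_eq {a : ℝ} (ha : 1 ≤ a) :
    ∫ t in (0:ℝ)..(π/2), fP a t = ∫ φ in (0:ℝ)..(π/2), gP a φ := by
  have ha0 : (0:ℝ) < a := lt_of_lt_of_le one_pos ha
  have hπ : (0:ℝ) < π/2 := by positivity
  set l : Filter ℝ := 𝓝[Ioo (0:ℝ) (π/2)] (π/2) with hl
  have hlne : l.NeBot := by
    rw [hl]
    exact right_nhdsWithin_Ioo_neBot hπ
  -- F tendsto
  have hF : Tendsto (fun c => ∫ t in (0:ℝ)..(Real.arctan (Real.tan c / a)), fP a t) l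
      (𝓝 (∫ t in (0:ℝ)..(π/2), fP a t)) := by
    have hprim : Continuous (fun u => ∫ t in (0:ℝ)..u, fP a t) :=
      intervalIntegral.continuous_primitive
        (fun u v => (fP_cont ha).intervalIntegrable u v) 0
    have hinner : Tendsto (fun c => Real.arctan (Real.tan c / a)) l (𝓝 (π/2)) := by
      have h1 : Tendsto Real.tan l atTop := by
        apply Real.tendsto_tan_pi_div_two.mono_left
        exact nhdsWithin_mono _ (Ioo_subset_Iio_self)
      have h2 : Tendsto (fun c => Real.tan c / a) l atTop := h1.atTop_div_const ha0
      exact (Real.tendsto_arctan_atTop.mono_right nhdsWithin_le_nhds).comp h2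
    exact (hprim.tendsto (π/2)).comp hinner
  -- G tendsto
  have hG : Tendsto (fun c => ∫ φ in (0:ℝ)..c, gP a φ) l
      (𝓝 (∫ φ in (0:ℝ)..(π/2), gP a φ)) := by
    have hcont := intervalIntegral.continuousOn_primitive_interval (gP_integrableOn ha)
    have := (hcont (π/2) (by rw [uIcc_of_le hπ.le]; exact ⟨hπ.le, le_refl _⟩))
    apply this.tendsto.mono_left
    apply nhdsWithin_mono
    rw [uIcc_of_le hπ.le]
    exact Ioo_subset_Icc_self
  have heq : (fun c => ∫ t in (0:ℝ)..(Real.arctan (Real.tan c / a)), fP a t)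
      =ᶠ[l] (fun c => ∫ φ in (0:ℝ)..c, gP a φ) := by
    filter_upwards [self_mem_nhdsWithin] with c hc
    exact subst_eq ha ⟨hc.1.le, hc.2⟩
  exact tendsto_nhds_unique (hF.congr' heq) hG

lemma phi1_eq_s11 {a : ℝ} (ha : 1 ≤ a) :
    Phi1 a (1/a) = -((1/π) * Real.sqrt (1 + a ^ 2) * ellPi (1 - a ^ 2) ((a ^ 2 - 1) / a ^ 2)) := by
  have ha0 : (0:ℝ) < a := lt_of_lt_of_le one_pos ha
  have hπ := Real.pi_pos
  have hsum : (0:ℝ) ≤ a + 1/a := by positivity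
  have h4 : 4 + (a - 1/a)^2 = (a + 1/a)^2 := by field_simp; ring
  have hmu : muC a (1/a) = Real.sqrt (a + 1/a) := by
    rw [muC, h4, Real.sqrt_sq (by positivity)]
    congr 1
    ring
  have hmu2 : muC a (1/a) ^ 2 = a + 1/a := by
    rw [hmu, Real.sq_sqrt hsum]
  have hden : a - muC a (1/a) ^ 2 = -(1/a) := by rw [hmu2]; ring
  have harg1 : (a - 1/a) / (a - muC a (1/a) ^ 2) = 1 - a^2 := by
    rw [hden]; field_simp; ring
  have harg2 : (a - 1/a) / a = (a^2 - 1)/a^2 := by field_simp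
  rw [Phi1, harg1, harg2, hden, hmu]
  have key : Real.sqrt (a + 1/a) * Real.sqrt a = Real.sqrt (1 + a^2) := by
    rw [← Real.sqrt_mul hsum a]
    congr 1
    field_simp
    ring
  have hsa : (0:ℝ) < Real.sqrt a := Real.sqrt_pos.2 ha0
  rw [div_eq_iff (by
    apply ne_of_lt
    apply mul_neg_of_pos_of_neg (by positivity)
    simp [ha0] : π * Real.sqrt a * -(1/a) ≠ 0)]
  have hsaa : Real.sqrt a * Real.sqrt a = a := Real.mul_self_sqrt ha0.le
  rw [← key]
  field_simp
  ring_nf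
  rw [show (Real.sqrt a)^2 = a from by rw [sq, hsaa]]
  ring


/-- As `a → ∞`, `(1/π)·√(1 + a²)·Π(1 - a², (a² - 1)/a²)` tends to `1/2`; equivalently,
`Φ₁(a, 1/a)` tends to `-1/2` as `a → +∞`. -/
theorem stmt_11 :
    Filter.Tendsto
      (fun a : ℝ => (1/π) * Real.sqrt (1 + a ^ 2) * ellPi (1 - a ^ 2) ((a ^ 2 - 1) / a ^ 2))
      Filter.atTop (nhds (1/2)) ∧
    Filter.Tendsto (fun a : ℝ => Phi1 a (1/a)) Filter.atTop (nhds (-(1/2))) := by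
  have hhalf : (1/π) * (π/2) = (1/2 : ℝ) := by
    field_simp
  have part1 : Filter.Tendsto
      (fun a : ℝ => (1/π) * Real.sqrt (1 + a ^ 2) * ellPi (1 - a ^ 2) ((a ^ 2 - 1) / a ^ 2))
      Filter.atTop (nhds (1/2)) := by
    have h2 : Tendsto (fun a : ℝ => (1/π) * ∫ φ in (0:ℝ)..(π/2), gP a φ) atTop
        (𝓝 ((1/π) * (π/2))) := gP_integral_tendsto.const_mul (1/π)
    rw [hhalf] at h2
    apply h2.congr'
    filter_upwards [eventually_ge_atTop (1:ℝ)] with a ha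
    rw [← int_eq ha, ← ellPi_eq ha, mul_assoc]
  refine ⟨part1, ?_⟩
  have h3 := part1.neg
  rw [show -(1/2 : ℝ) = -(1/2 : ℝ) from rfl] at h3
  apply h3.congr'
  filter_upwards [eventually_ge_atTop (1:ℝ)] with a ha
  rw [phi1_eq_s11 ha]
end

section
/- For every real x with −1/√2 < x < −1/2, the set {(a,b) ∈ ℝ² : a ≥ b > 0, ab ≥ 1, Φ₁(a,b) = x} is compact. -/
open Real Filter

section Helpers

lemma pos_aux {m : ℝ} (hm : m < 1) (t : ℝ) : 0 < 1 - m * Real.sin t ^ 2 := by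
  rcases le_or_gt m 0 with h | h
  · nlinarith only [h, sq_nonneg (Real.sin t), Real.sin_sq_le_one t]
  · nlinarith only [h, hm, Real.sin_sq_le_one t, sq_nonneg (Real.sin t)]

lemma pos_aux2 {κ : ℝ} (hκ : 0 ≤ κ) (t : ℝ) : 0 < 1 + κ * Real.sin t ^ 2 := by
  nlinarith only [hκ, sq_nonneg (Real.sin t)]

lemma cont1 {κ : ℝ} (hκ : 0 ≤ κ) : Continuous fun t : ℝ => 1 / (1 + κ * Real.sin t ^ 2) :=
  continuous_const.div (by continuity) (fun t => (pos_aux2 hκ t).ne')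

lemma cont2 {m : ℝ} (hm : m < 1) : Continuous fun t : ℝ => 1 / Real.sqrt (1 - m * Real.sin t ^ 2) :=
  continuous_const.div (by continuity) (fun t => (Real.sqrt_pos.2 (pos_aux hm t)).ne')

lemma cont3 {κ m : ℝ} (hκ : 0 ≤ κ) (hm : m < 1) :
    Continuous fun t : ℝ => 1 / ((1 + κ * Real.sin t ^ 2) * Real.sqrt (1 - m * Real.sin t ^ 2)) :=
  continuous_const.div (by continuity)
    (fun t => (mul_pos (pos_aux2 hκ t) (Real.sqrt_pos.2 (pos_aux hm t))).ne')

lemma H1 {κ : ℝ} (hκ : 0 ≤ κ) {T : ℝ} (hT0 : 0 ≤ T) (hT : T ≤ π/2) :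
    ∫ t in (0:ℝ)..T, 1 / (1 + κ * Real.sin t ^ 2) ≤ π / (2 * Real.sqrt (1 + κ)) := by
  have hs1 : 1 ≤ Real.sqrt (1 + κ) := Real.one_le_sqrt.2 (by linarith)
  set s := Real.sqrt (1 + κ) with hs_def
  have hs0 : 0 < s := by linarith
  have hs2 : s ^ 2 = 1 + κ := Real.sq_sqrt (by linarith)
  apply le_of_forall_pos_le_add
  intro δ hδ
  set T' := T - min δ T with hT'def
  have hminpos : 0 ≤ min δ T := le_min hδ.le hT0
  have hT'0 : 0 ≤ T' := by have := min_le_right δ T; simp only [hT'def]; linarith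
  have hT'T : T' ≤ T := by simp only [hT'def]; linarith
  have hT'lt : T' < π/2 := by
    rcases lt_or_eq_of_le hT with h | h
    · linarith
    · have hTpos : 0 < T := by rw [h]; exact Real.pi_div_two_pos
      have : 0 < min δ T := lt_min hδ hTpos
      linarith
  have hcos : ∀ t ∈ Set.Icc (0:ℝ) T', 0 < Real.cos t := fun t ht =>
    Real.cos_pos_of_mem_Ioo ⟨by nlinarith [ht.1, Real.pi_pos], lt_of_le_of_lt ht.2 hT'lt⟩
  have key : ∫ t in (0:ℝ)..T', 1 / (1 + κ * Real.sin t ^ 2)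
      = Real.arctan (s * Real.tan T') / s - Real.arctan (s * Real.tan 0) / s := by
    refine intervalIntegral.integral_eq_sub_of_hasDerivAt
      (f := fun u => Real.arctan (s * Real.tan u) / s) ?_ ?_
    · intro t ht
      rw [Set.uIcc_of_le hT'0] at ht
      have hct := hcos t ht
      have h1 : HasDerivAt Real.tan (1 / Real.cos t ^ 2) t := Real.hasDerivAt_tan hct.ne'
      have h2 : HasDerivAt (fun u => s * Real.tan u) (s * (1 / Real.cos t ^ 2)) t := h1.const_mul s
      have h3 : HasDerivAt Real.arctan (1 / (1 + (s * Real.tan t) ^ 2)) (s * Real.tan t) :=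
        Real.hasDerivAt_arctan _
      have h4 := (h3.comp t h2).div_const s
      refine HasDerivAt.congr_deriv h4 (Eq.symm ?_)
      have h5 : Real.sin t ^ 2 + Real.cos t ^ 2 = 1 := Real.sin_sq_add_cos_sq t
      rw [Real.tan_eq_sin_div_cos]
      field_simp
      ring_nf
      linear_combination (Real.sin t ^ 2) * hs2 + h5
    · exact ((cont1 hκ).intervalIntegrable _ _)
  have split : ∫ t in (0:ℝ)..T, 1 / (1 + κ * Real.sin t ^ 2)
      = (∫ t in (0:ℝ)..T', 1 / (1 + κ * Real.sin t ^ 2))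
        + ∫ t in T'..T, 1 / (1 + κ * Real.sin t ^ 2) :=
    (intervalIntegral.integral_add_adjacent_intervals ((cont1 hκ).intervalIntegrable _ _)
      ((cont1 hκ).intervalIntegrable _ _)).symm
  have tail : ∫ t in T'..T, 1 / (1 + κ * Real.sin t ^ 2) ≤ δ := by
    have h1 : ∫ t in T'..T, 1 / (1 + κ * Real.sin t ^ 2) ≤ ∫ t in T'..T, (1:ℝ) := by
      apply intervalIntegral.integral_mono_on hT'T ((cont1 hκ).intervalIntegrable _ _)
        (intervalIntegrable_const)
      intro t _
      rw [div_le_one (pos_aux2 hκ t)]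
      nlinarith [sq_nonneg (Real.sin t)]
    have h2 : ∫ t in T'..T, (1:ℝ) = min δ T := by
      simp [hT'def]
    calc _ ≤ min δ T := h1.trans h2.le
      _ ≤ δ := min_le_left _ _
  have head : ∫ t in (0:ℝ)..T', 1 / (1 + κ * Real.sin t ^ 2) ≤ π / (2 * s) := by
    rw [key]
    simp only [Real.tan_zero, mul_zero, Real.arctan_zero, zero_div, sub_zero]
    rw [div_le_div_iff₀ hs0 (by positivity)]
    have := (Real.arctan_lt_pi_div_two (s * Real.tan T')).le
    nlinarith [Real.neg_pi_div_two_lt_arctan (s * Real.tan T'), Real.pi_pos]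
  linarith [split, head, tail]

lemma H2 {β : ℝ} (hβ0 : 0 < β) (hβ1 : β ≤ 1) :
    ∫ t in (0:ℝ)..(π/2), 1 / Real.sqrt (1 - (1 - β) * Real.sin t ^ 2)
      ≤ π/2 * (1 + Real.log (1/β) / 2) := by
  have hpi := Real.pi_pos
  have hsb0 : 0 < Real.sqrt β := Real.sqrt_pos.2 hβ0
  set sb := Real.sqrt β with hsb_def
  have hsb1 : sb ≤ 1 := by
    rw [hsb_def, show (1:ℝ) = Real.sqrt 1 by simp]
    exact Real.sqrt_le_sqrt hβ1
  have hsb2 : sb ^ 2 = β := Real.sq_sqrt hβ0.le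
  set t₁ := π/2 * (1 - sb) with ht₁_def
  have ht₁0 : 0 ≤ t₁ := by nlinarith
  have ht₁2 : t₁ ≤ π/2 := by nlinarith
  have hm1 : (1 - β) < 1 := by linarith
  have hint := (cont2 hm1).intervalIntegrable (μ := MeasureTheory.volume)
  -- part 1 : on [0, t₁]
  have lin_pos : ∀ t ∈ Set.Icc (0:ℝ) t₁, sb ≤ 1 - 2/π * t := by
    intro t ht
    have h2 : 2/π * t ≤ 2/π * t₁ := by
      apply mul_le_mul_of_nonneg_left ht.2; positivity
    have h3 : 2/π * t₁ = 1 - sb := by rw [ht₁_def]; field_simp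
    linarith
  have pt1 : ∀ t ∈ Set.Icc (0:ℝ) t₁, 1 / Real.sqrt (1 - (1 - β) * Real.sin t ^ 2)
      ≤ 1 / (1 - 2/π * t) := by
    intro t ht
    have hl := lin_pos t ht
    have hcos : 1 - 2/π * t ≤ Real.cos t :=
      Real.one_sub_mul_le_cos ht.1 (le_trans ht.2 ht₁2)
    have h5 := Real.sin_sq_add_cos_sq t
    have hc2 : (1 - 2/π*t)^2 ≤ 1 - (1-β) * Real.sin t ^ 2 := by nlinarith [sq_nonneg (Real.sin t)]
    have hsq : 1 - 2/π * t ≤ Real.sqrt (1 - (1-β) * Real.sin t ^ 2) := by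
      rw [show (1:ℝ) - 2/π*t = Real.sqrt ((1 - 2/π*t)^2) by
        rw [Real.sqrt_sq (by linarith)]]
      exact Real.sqrt_le_sqrt hc2
    apply one_div_le_one_div_of_le (by linarith) hsq
  have ftc : ∫ t in (0:ℝ)..t₁, 1 / (1 - 2/π * t)
      = -(π/2) * Real.log (1 - 2/π * t₁) - (-(π/2) * Real.log (1 - 2/π * 0)) := by
    refine intervalIntegral.integral_eq_sub_of_hasDerivAt
      (f := fun t => -(π/2) * Real.log (1 - 2/π * t)) ?_ ?_
    · intro t ht
      rw [Set.uIcc_of_le ht₁0] at ht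
      have hl := lin_pos t ht
      have hne : (1 - 2/π * t) ≠ 0 := by linarith
      have hin : HasDerivAt (fun t : ℝ => 1 - 2/π * t) (-(2/π)) t := by
        simpa using ((hasDerivAt_id t).const_mul (2/π)).const_sub 1
      have hlog := (Real.hasDerivAt_log hne).comp t hin
      have := hlog.const_mul (-(π/2))
      refine HasDerivAt.congr_deriv this (Eq.symm ?_)
      rw [show -(π/2) * ((1 - 2/π*t)⁻¹ * -(2/π)) = (1 - 2/π*t)⁻¹ * ((π/2)*(2/π)) by ring,
        show (π/2)*(2/π) = 1 by field_simp, one_div, mul_one]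
    · apply ContinuousOn.intervalIntegrable
      rw [Set.uIcc_of_le ht₁0]
      apply ContinuousOn.div continuousOn_const (by fun_prop)
      intro t ht
      have := lin_pos t ht; linarith
  have part1 : ∫ t in (0:ℝ)..t₁, 1 / Real.sqrt (1 - (1 - β) * Real.sin t ^ 2)
      ≤ π/4 * Real.log (1/β) := by
    have hmono := intervalIntegral.integral_mono_on ht₁0 (hint 0 t₁)
      (by apply ContinuousOn.intervalIntegrable
          rw [Set.uIcc_of_le ht₁0]
          apply ContinuousOn.div continuousOn_const (by fun_prop)
          intro t ht
          have := lin_pos t ht; linarith) pt1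
    have hval : ∫ t in (0:ℝ)..t₁, 1 / (1 - 2/π * t) = π/4 * Real.log (1/β) := by
      rw [ftc]
      have h3 : 1 - 2/π * t₁ = sb := by rw [ht₁_def]; field_simp; ring
      rw [h3]
      simp only [mul_zero, sub_zero, Real.log_one, mul_zero]
      rw [hsb_def, Real.log_sqrt hβ0.le, one_div, Real.log_inv]
      ring
    linarith
  -- part 2 : on [t₁, π/2]
  have pt2 : ∀ t ∈ Set.Icc t₁ (π/2), 1 / Real.sqrt (1 - (1 - β) * Real.sin t ^ 2)
      ≤ 1 / sb := by
    intro t _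
    have hsq : sb ≤ Real.sqrt (1 - (1-β) * Real.sin t ^ 2) := by
      rw [hsb_def]
      apply Real.sqrt_le_sqrt
      nlinarith [Real.sin_sq_le_one t, sq_nonneg (Real.sin t)]
    exact one_div_le_one_div_of_le hsb0 hsq
  have part2 : ∫ t in t₁..(π/2), 1 / Real.sqrt (1 - (1 - β) * Real.sin t ^ 2) ≤ π/2 := by
    have hmono := intervalIntegral.integral_mono_on ht₁2 (hint t₁ (π/2))
      intervalIntegrable_const pt2
    have hval : ∫ _t in t₁..(π/2), (1/sb) = (π/2 - t₁) * (1/sb) := by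
      simp [smul_eq_mul, mul_comm]
    have : (π/2 - t₁) * (1/sb) = π/2 := by
      rw [ht₁_def]; field_simp; ring
    linarith
  have split := intervalIntegral.integral_add_adjacent_intervals (hint 0 t₁) (hint t₁ (π/2))
  have hlog0 : 0 ≤ Real.log (1/β) := by
    apply Real.log_nonneg
    rw [le_div_iff₀ hβ0]; linarith
  linarith

lemma muC_sq {a b : ℝ} (ha : 0 < a) (hb : 0 < b) :
    muC a b ^ 2 = (a + b + Real.sqrt (4 + (a - b) ^ 2)) / 2 := by
  have hr0 : 0 ≤ Real.sqrt (4 + (a-b)^2) := Real.sqrt_nonneg _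
  exact Real.sq_sqrt (by nlinarith)

lemma sqrt_gt_abs {d : ℝ} : |d| < Real.sqrt (4 + d ^ 2) := by
  have hr0 : 0 ≤ Real.sqrt (4 + d^2) := Real.sqrt_nonneg _
  have hr2 : (Real.sqrt (4 + d^2))^2 = 4 + d^2 := Real.sq_sqrt (by positivity)
  by_contra h
  push_neg at h
  have := mul_self_le_mul_self hr0 h
  nlinarith [sq_abs d]

lemma muC_gt_a {a b : ℝ} (ha : 0 < a) (hb : 0 < b) : a < muC a b ^ 2 := by
  rw [muC_sq ha hb]
  have := sqrt_gt_abs (d := a - b)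
  have := le_abs_self (a - b)
  linarith

lemma muC_gt_b {a b : ℝ} (ha : 0 < a) (hb : 0 < b) : b < muC a b ^ 2 := by
  rw [muC_sq ha hb]
  have := sqrt_gt_abs (d := a - b)
  have := neg_abs_le (a - b)
  linarith

lemma muC_pos {a b : ℝ} (ha : 0 < a) (hb : 0 < b) : 0 < muC a b := by
  have h := muC_gt_a ha hb
  have h0 : 0 ≤ muC a b := by unfold muC; positivity
  rcases h0.lt_or_eq with h' | h'
  · exact h'
  · exfalso; nlinarith

lemma muC_cont : Continuous (fun p : ℝ × ℝ => muC p.1 p.2) := by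
  unfold muC
  fun_prop

lemma phi1_contOn :
    ContinuousOn (fun p : ℝ × ℝ => Phi1 p.1 p.2) {p : ℝ × ℝ | 0 < p.1 ∧ 0 < p.2} := by
  set U : Set (ℝ × ℝ) := {p : ℝ × ℝ | 0 < p.1 ∧ 0 < p.2} with hU_def
  have hUopen : IsOpen U :=
    (isOpen_lt continuous_const continuous_fst).inter (isOpen_lt continuous_const continuous_snd)
  haveI : LocallyCompactSpace ↥U := hUopen.locallyCompactSpace
  -- basic facts on U
  have hden_neg : ∀ p : ℝ × ℝ, p ∈ U → p.1 - muC p.1 p.2 ^ 2 < 0 := fun p hp => by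
    have := muC_gt_a hp.1 hp.2; linarith
  have hn_lt1 : ∀ p : ℝ × ℝ, p ∈ U → (p.1 - p.2) / (p.1 - muC p.1 p.2 ^ 2) < 1 := fun p hp => by
    rw [div_lt_one_of_neg (hden_neg p hp)]
    have := muC_gt_b hp.1 hp.2; linarith
  have hm_lt1 : ∀ p : ℝ × ℝ, p ∈ U → (p.1 - p.2) / p.1 < 1 := fun p hp => by
    rw [div_lt_one hp.1]; linarith [hp.2]
  -- the restricted parameter functions
  set nn : ↥U → ℝ := fun p => ((p : ℝ × ℝ).1 - (p : ℝ × ℝ).2) / ((p : ℝ × ℝ).1 - muC (p : ℝ × ℝ).1 (p : ℝ × ℝ).2 ^ 2) with hnn_def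
  set mm : ↥U → ℝ := fun p => ((p : ℝ × ℝ).1 - (p : ℝ × ℝ).2) / (p : ℝ × ℝ).1 with hmm_def
  have cont_nn : Continuous nn := by
    apply Continuous.div (by fun_prop)
    · exact (continuous_subtype_val.fst).sub ((muC_cont.comp continuous_subtype_val).pow 2)
    · exact fun p => (hden_neg p p.2).ne
  have cont_mm : Continuous mm := by
    apply Continuous.div (by fun_prop) (by fun_prop)
    exact fun p => p.2.1.ne'
  -- the parametric integrand
  have cont_F : Continuous (Function.uncurry (fun (p : ↥U) (t : ℝ) =>
      1 / ((1 - nn p * Real.sin t ^ 2) * Real.sqrt (1 - mm p * Real.sin t ^ 2)))) := by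
    apply Continuous.div continuous_const
    · apply Continuous.mul
      · fun_prop
      · apply Real.continuous_sqrt.comp
        fun_prop
    · rintro ⟨p, t⟩
      have h1 := pos_aux (hn_lt1 p p.2) t
      have h2 := pos_aux (hm_lt1 p p.2) t
      exact (mul_pos h1 (Real.sqrt_pos.2 h2)).ne'
  have cont_int : Continuous (fun p : ↥U =>
      ∫ t in Set.Icc (0:ℝ) (π/2), 1 / ((1 - nn p * Real.sin t ^ 2) * Real.sqrt (1 - mm p * Real.sin t ^ 2))) :=
    continuous_parametric_integral_of_continuous cont_F isCompact_Icc
  -- identify ellPi with the set integral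
  have hellPi : ∀ n m : ℝ, ellPi n m =
      ∫ t in Set.Icc (0:ℝ) (π/2), 1 / ((1 - n * Real.sin t ^ 2) * Real.sqrt (1 - m * Real.sin t ^ 2)) := by
    intro n m
    rw [ellPi, intervalIntegral.integral_of_le (by positivity),
      ← MeasureTheory.integral_Icc_eq_integral_Ioc]
  rw [continuousOn_iff_continuous_restrict]
  have hrepr : U.domRestrict (fun p : ℝ × ℝ => Phi1 p.1 p.2) = fun p : ↥U =>
      muC (p : ℝ × ℝ).1 (p : ℝ × ℝ).2 *
        (∫ t in Set.Icc (0:ℝ) (π/2), 1 / ((1 - nn p * Real.sin t ^ 2) * Real.sqrt (1 - mm p * Real.sin t ^ 2))) /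
        (π * Real.sqrt (p : ℝ × ℝ).1 * ((p : ℝ × ℝ).1 - muC (p : ℝ × ℝ).1 (p : ℝ × ℝ).2 ^ 2)) := by
    funext p
    simp only [Set.domRestrict_apply, Phi1, hellPi, hnn_def, hmm_def]
  rw [hrepr]
  apply Continuous.div
  · exact ((muC_cont.comp continuous_subtype_val)).mul cont_int
  · exact (continuous_const.mul (Real.continuous_sqrt.comp continuous_subtype_val.fst)).mul
      (continuous_subtype_val.fst.sub ((muC_cont.comp continuous_subtype_val).pow 2))
  · rintro ⟨p, hp⟩
    have h1 : 0 < Real.sqrt p.1 := Real.sqrt_pos.2 hp.1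
    have h2 := hden_neg p hp
    have := Real.pi_pos
    simp only []
    intro hcontra
    rcases mul_eq_zero.1 hcontra with h | h
    · rcases mul_eq_zero.1 h with h' | h'
      · linarith
      · linarith
    · linarith

set_option maxHeartbeats 2000000 in
lemma phi1_gt {x : ℝ} (hx : x < -(1/2)) :
    ∃ M : ℝ, 1 ≤ M ∧ ∀ a b : ℝ, b ≤ a → 0 < b → 1 ≤ a * b → M ≤ a → x < Phi1 a b := by
  have hpi := Real.pi_pos
  set y : ℝ := -x with hy_def
  have hy : 1/2 < y := by simp only [hy_def]; linarith
  clear_value y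
  set ε : ℝ := (4*y^2 - 1)/(4*y^2 + 1) with hε_def
  have hy2 : 1 < 4*y^2 := by nlinarith only [hy, sq_nonneg (2*y - 1)]
  have hε0 : 0 < ε := by rw [hε_def]; apply div_pos <;> linarith only [hy2]
  have hε1 : ε < 1 := by rw [hε_def, div_lt_one (by linarith only [hy2])]; linarith only []
  have hεid : 4*y^2*(1-ε) = 1 + ε := by rw [hε_def]; field_simp; ring
  clear_value ε
  set Z : ℝ := 11/(ε*(2*y-1)) with hZ_def
  have hZ0 : 0 < Z := by
    rw [hZ_def]; exact div_pos (by norm_num) (mul_pos hε0 (by linarith only [hy]))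
  have hZinv : 1/Z = ε*(2*y-1)/11 := by rw [hZ_def, one_div_div]
  clear_value Z
  refine ⟨max (max 9 (2/ε)) (Z^4 + 1),
    le_trans (by norm_num : (1:ℝ) ≤ 9) ((le_max_left 9 (2/ε)).trans (le_max_left _ _)), ?_⟩
  intro a b hba hb hab hMa
  have ha : 0 < a := hb.trans_le hba
  have ha9 : 9 ≤ a := le_trans ((le_max_left 9 (2/ε)).trans (le_max_left _ _)) hMa
  have haε : 2/ε ≤ a := le_trans ((le_max_right 9 (2/ε)).trans (le_max_left _ _)) hMa
  have haZ : Z^4 + 1 ≤ a := le_trans (le_max_right _ _) hMa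
  have ha1 : 1 ≤ a := by linarith
  set d : ℝ := a - b with hd_def
  clear_value d
  have hd0 : 0 ≤ d := by linarith
  have hd_lt : d < a := by linarith
  set r : ℝ := Real.sqrt (4 + d^2) with hr_def
  have hr2 : r^2 = 4 + d^2 := Real.sq_sqrt (by positivity)
  have hrnn : 0 ≤ r := Real.sqrt_nonneg _
  clear_value r
  have hr_ge2 : 2 ≤ r := by nlinarith only [hr2, hrnn, sq_nonneg d, sq_nonneg (r-2), sq_nonneg (r+2)]
  have hrd : d < r := by nlinarith only [hr2, hrnn, hd0]
  set c : ℝ := (r - d)/2 with hc_def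
  clear_value c
  have hc0 : 0 < c := by rw [hc_def]; linarith
  have hcd : c*(c+d) = 1 := by rw [hc_def]; linear_combination hr2/4
  have hc1 : c ≤ 1 := by nlinarith only [hcd, hc0, hd0, mul_nonneg hc0.le hd0]
  have hmu2 : muC a b ^ 2 = a + c := by
    rw [muC_sq ha hb, ← hd_def, ← hr_def, hc_def, hd_def]; ring
  have hamu : a - muC a b ^ 2 = -c := by rw [hmu2]; ring
  have hmu0 : 0 < muC a b := muC_pos ha hb
  set sa : ℝ := Real.sqrt a with hsa_def
  have hsa0 : 0 < sa := Real.sqrt_pos.2 ha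
  have hsa2 : sa^2 = a := Real.sq_sqrt ha.le
  clear_value sa
  set m : ℝ := d/a with hm_def
  have hm0 : 0 ≤ m := div_nonneg hd0 ha.le
  have hm1 : m < 1 := (div_lt_one ha).2 hd_lt
  have hm' : 1 - m = b / a := by rw [hm_def, hd_def]; field_simp; ring
  have hma : m * a = d := by rw [hm_def]; field_simp
  clear_value m
  set κ : ℝ := d/c with hκ_def
  have hκ0 : 0 ≤ κ := div_nonneg hd0 hc0.le
  have hκc : κ * c = d := by rw [hκ_def]; field_simp
  clear_value κ
  have hinv : 1/c = c + d := by
    rw [eq_comm, eq_div_iff hc0.ne']; linear_combination hcd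
  have hsqrtκ : Real.sqrt (1 + κ) = 1/c := by
    have h1 : 1 + κ = (1/c)^2 := by
      rw [hκ_def, div_eq_mul_one_div d c, hinv]
      linear_combination -hcd
    rw [h1, Real.sqrt_sq (one_div_nonneg.2 hc0.le)]
  have hπc : π / (2 * Real.sqrt (1+κ)) = π * c / 2 := by
    rw [hsqrtκ]; field_simp
  set f : ℝ → ℝ := fun t => 1 / ((1 + κ * Real.sin t ^ 2) * Real.sqrt (1 - m * Real.sin t ^ 2))
    with hf_def
  have hf_cont : Continuous f := cont3 hκ0 hm1
  have hf_int := fun (u v : ℝ) => (hf_cont.intervalIntegrable (μ := MeasureTheory.volume) u v)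
  have hf_nonneg : ∀ t : ℝ, 0 ≤ f t := fun t => by
    rw [hf_def]
    have h1 := pos_aux2 hκ0 t
    have h2 := pos_aux hm1 t
    positivity
  have hfAB : ∀ t : ℝ, f t = (1/(1 + κ * Real.sin t ^ 2)) * (1/Real.sqrt (1 - m * Real.sin t ^ 2)) := by
    intro t; rw [hf_def, one_div_mul_one_div]
  have hPi_repr : ellPi ((a - b) / (a - muC a b ^ 2)) ((a - b) / a)
      = ∫ t in (0:ℝ)..(π/2), f t := by
    rw [ellPi]
    apply intervalIntegral.integral_congr
    intro t _
    rw [hamu, ← hd_def, ← hm_def, hf_def]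
    rw [show d / (-c) = -(d/c) by rw [div_neg], ← hκ_def]
    ring_nf
  clear_value f
  set I : ℝ := ∫ t in (0:ℝ)..(π/2), f t with hI_def
  clear_value I
  have hPhi : Phi1 a b = -(muC a b * I / (π * sa * c)) := by
    rw [Phi1, hPi_repr, hamu, ← hsa_def,
      show π * sa * (-c) = -(π * sa * c) by ring, div_neg]
  have hden : (0:ℝ) < π * sa * c := mul_pos (mul_pos hpi hsa0) hc0
  suffices key : muC a b * I < y * (π * sa * c) by
    rw [hPhi]
    have hq : muC a b * I / (π * sa * c) < y := (div_lt_iff₀ hden).2 key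
    rw [hy_def] at hq
    linarith
  rcases lt_or_ge ((1-ε)*a) b with hA | hB
  · -- Regime A : b close to a
    have hsb0 : 0 < Real.sqrt b := Real.sqrt_pos.2 hb
    have hsb2 : (Real.sqrt b)^2 = b := Real.sq_sqrt hb.le
    have pw : ∀ t ∈ Set.Icc (0:ℝ) (π/2), f t ≤ (sa/Real.sqrt b) * (1/(1 + κ * Real.sin t ^ 2)) := by
      intro t _
      have h1 : b/a ≤ 1 - m * Real.sin t ^ 2 := by
        have : m * Real.sin t ^ 2 ≤ m := by
          nlinarith only [Real.sin_sq_le_one t, sq_nonneg (Real.sin t), hm0, hm1]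
        linarith [hm']
      have h2 : Real.sqrt (b/a) ≤ Real.sqrt (1 - m * Real.sin t ^ 2) := Real.sqrt_le_sqrt h1
      have h3 : Real.sqrt (b/a) = Real.sqrt b / sa := by rw [Real.sqrt_div hb.le, hsa_def]
      have h4 : 0 < Real.sqrt b / sa := div_pos hsb0 hsa0
      have h5 : 1/Real.sqrt (1 - m * Real.sin t ^ 2) ≤ sa/Real.sqrt b := by
        have := one_div_le_one_div_of_le h4 (h3 ▸ h2)
        rwa [one_div_div] at this
      calc f t = (1/(1 + κ * Real.sin t ^ 2)) * (1/Real.sqrt (1 - m * Real.sin t ^ 2)) := hfAB t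
        _ ≤ (1/(1 + κ * Real.sin t ^ 2)) * (sa/Real.sqrt b) :=
            mul_le_mul_of_nonneg_left h5 (one_div_nonneg.2 (pos_aux2 hκ0 t).le)
        _ = (sa/Real.sqrt b) * (1/(1 + κ * Real.sin t ^ 2)) := by ring
    have hPib : I ≤ (sa/Real.sqrt b) * (π * c / 2) := by
      have hmono := intervalIntegral.integral_mono_on (by positivity : (0:ℝ) ≤ π/2) (hf_int 0 (π/2))
        ((continuous_const.mul (cont1 hκ0)).intervalIntegrable 0 (π/2)) pw
      simp only [Pi.mul_apply] at hmono
      rw [intervalIntegral.integral_const_mul] at hmono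
      have hH := H1 hκ0 (by positivity : (0:ℝ) ≤ π/2) (le_refl (π/2))
      rw [hπc] at hH
      calc I = ∫ t in (0:ℝ)..(π/2), f t := hI_def
        _ ≤ (sa/Real.sqrt b) * ∫ t in (0:ℝ)..(π/2), 1/(1 + κ * Real.sin t ^ 2) := hmono
        _ ≤ (sa/Real.sqrt b) * (π * c / 2) :=
            mul_le_mul_of_nonneg_left hH (le_of_lt (div_pos hsa0 hsb0))
    have hεa : 2 ≤ ε * a := by
      rw [div_le_iff₀ hε0] at haε; linarith
    have hstep : 4*y^2*((1-ε)*a) < 4*y^2*b := by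
      apply mul_lt_mul_of_pos_left hA (by linarith only [hy2])
    have hεid_a : 4*y^2*((1-ε)*a) = (1+ε)*a := by linear_combination a * hεid
    have h4 : a + c < 4*y^2*b := by linarith only [hstep, hεid_a, hεa, hc1]
    have hmub : muC a b < 2*y*Real.sqrt b := by
      apply lt_of_pow_lt_pow_left₀ 2 (mul_nonneg (by linarith : (0:ℝ) ≤ 2*y) (Real.sqrt_nonneg b))
      rw [hmu2]
      calc a + c < 4*y^2*b := h4
        _ = (2*y*Real.sqrt b)^2 := by rw [mul_pow, mul_pow, hsb2]; ring
    calc muC a b * I ≤ muC a b * ((sa/Real.sqrt b) * (π * c / 2)) :=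
          mul_le_mul_of_nonneg_left hPib hmu0.le
      _ < y * (π * sa * c) := by
          have hpos : 0 < sa*(π*c/2)/Real.sqrt b :=
            div_pos (mul_pos hsa0 (by linarith only [mul_pos hpi hc0])) hsb0
          have hmul := mul_lt_mul_of_pos_right hmub hpos
          have e1 : muC a b * ((sa/Real.sqrt b)*(π*c/2)) = muC a b * (sa*(π*c/2)/Real.sqrt b) := by
            ring
          have e2 : 2*y*Real.sqrt b * (sa*(π*c/2)/Real.sqrt b) = y*(π*sa*c) := by
            field_simp
          rw [e1]; rw [e2] at hmul; exact hmul
  · -- Regime B : d ≥ ε * a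
    have hd_ge : ε * a ≤ d := by
      have : (1-ε)*a = a - ε*a := by ring
      linarith
    have hεapos : 0 < ε*a := mul_pos hε0 ha
    have hdpos : 0 < d := lt_of_lt_of_le hεapos hd_ge
    have hκpos : 0 < κ := by rw [hκ_def]; exact div_pos hdpos hc0
    -- the fourth root q
    set q : ℝ := Real.sqrt sa with hq_def
    have hq0 : 0 < q := Real.sqrt_pos.2 hsa0
    have hq2 : q^2 = sa := Real.sq_sqrt hsa0.le
    clear_value q
    have hq4 : q^4 = a := by rw [show q^4 = (q^2)^2 by ring, hq2, hsa2]
    have hsa3 : 3 ≤ sa := by nlinarith only [hsa2, hsa0, ha9, sq_nonneg (sa - 3), sq_nonneg (sa + 3)]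
    have hq2ge3 : 3 ≤ q^2 := by rw [hq2]; exact hsa3
    have hq1 : 1 < q := by nlinarith only [hq2ge3, hq0, sq_nonneg (q-1), sq_nonneg (q+1)]
    have hqZ : Z < q := by
      apply lt_of_pow_lt_pow_left₀ 4 hq0.le
      rw [hq4]; linarith
    set s0 : ℝ := 1/q^2 with hs0_def
    have hs00 : 0 < s0 := by rw [hs0_def]; positivity
    have hs0le : s0 ≤ 1/3 := by
      rw [hs0_def, div_le_div_iff₀ (pow_pos hq0 2) (by norm_num)]; linarith only [hq2ge3]
    have hs0q : s0 * q^2 = 1 := by rw [hs0_def]; field_simp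
    clear_value s0
    have hs01 : s0 < 1 := by linarith
    -- the splitting point
    set t0 : ℝ := Real.arcsin (Real.sqrt s0) with ht0_def
    have hss1 : Real.sqrt s0 ≤ 1 := by
      rw [show (1:ℝ) = Real.sqrt 1 by simp]
      exact Real.sqrt_le_sqrt (by linarith)
    have hsin_t0 : Real.sin t0 = Real.sqrt s0 :=
      Real.sin_arcsin (le_trans (by norm_num) (Real.sqrt_nonneg _)) hss1
    have ht00 : 0 ≤ t0 := Real.arcsin_nonneg.2 (Real.sqrt_nonneg _)
    have ht0le : t0 ≤ π/2 := Real.arcsin_le_pi_div_two _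
    clear_value t0
    have hsin2 : Real.sin t0 ^ 2 = s0 := by rw [hsin_t0, Real.sq_sqrt hs00.le]
    -- split the integral
    have hsplit : I = (∫ t in (0:ℝ)..t0, f t) + ∫ t in t0..(π/2), f t := by
      rw [hI_def, ← intervalIntegral.integral_add_adjacent_intervals (hf_int 0 t0) (hf_int t0 (π/2))]
    -- Part 1
    have pw1 : ∀ t ∈ Set.Icc (0:ℝ) t0, f t ≤ (1/Real.sqrt (1-s0)) * (1/(1 + κ * Real.sin t ^ 2)) := by
      intro t ht
      have hsint : Real.sin t ≤ Real.sin t0 := by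
        apply (Real.strictMonoOn_sin.monotoneOn) ⟨by linarith [ht.1], by linarith [ht.2, ht0le]⟩
          ⟨by linarith, ht0le⟩ ht.2
      have hsint0 : 0 ≤ Real.sin t := Real.sin_nonneg_of_nonneg_of_le_pi ht.1
        (by linarith [ht.2, ht0le])
      have hs2 : Real.sin t ^ 2 ≤ s0 := by
        rw [← hsin2]; exact pow_le_pow_left₀ hsint0 hsint 2
      have h1 : 1 - s0 ≤ 1 - m * Real.sin t ^ 2 := by
        nlinarith only [hs2, hm0, hm1, sq_nonneg (Real.sin t)]
      have hsr : 0 < Real.sqrt (1-s0) := Real.sqrt_pos.2 (by linarith)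
      have h5 : 1/Real.sqrt (1 - m * Real.sin t ^ 2) ≤ 1/Real.sqrt (1-s0) :=
        one_div_le_one_div_of_le hsr (Real.sqrt_le_sqrt h1)
      calc f t = (1/(1 + κ * Real.sin t ^ 2)) * (1/Real.sqrt (1 - m * Real.sin t ^ 2)) := hfAB t
        _ ≤ (1/(1 + κ * Real.sin t ^ 2)) * (1/Real.sqrt (1-s0)) :=
            mul_le_mul_of_nonneg_left h5 (one_div_nonneg.2 (pos_aux2 hκ0 t).le)
        _ = (1/Real.sqrt (1-s0)) * (1/(1 + κ * Real.sin t ^ 2)) := by ring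
    have hI1 : (∫ t in (0:ℝ)..t0, f t) ≤ (1/Real.sqrt (1-s0)) * (π * c / 2) := by
      have hmono := intervalIntegral.integral_mono_on ht00 (hf_int 0 t0)
        ((continuous_const.mul (cont1 hκ0)).intervalIntegrable 0 t0) pw1
      simp only [Pi.mul_apply] at hmono
      rw [intervalIntegral.integral_const_mul] at hmono
      have hH := H1 hκ0 ht00 ht0le
      rw [hπc] at hH
      have hsr : 0 < Real.sqrt (1-s0) := Real.sqrt_pos.2 (by linarith)
      calc (∫ t in (0:ℝ)..t0, f t)
          ≤ (1/Real.sqrt (1-s0)) * ∫ t in (0:ℝ)..t0, 1/(1 + κ * Real.sin t ^ 2) := hmono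
        _ ≤ (1/Real.sqrt (1-s0)) * (π * c / 2) :=
            mul_le_mul_of_nonneg_left hH (one_div_nonneg.2 hsr.le)
    -- Part 2
    have hκs0 : 0 < κ * s0 := mul_pos hκpos hs00
    have pw2 : ∀ t ∈ Set.Icc t0 (π/2), f t ≤ (1/(κ*s0)) * (1/Real.sqrt (1 - m * Real.sin t ^ 2)) := by
      intro t ht
      have hsint : Real.sin t0 ≤ Real.sin t := by
        apply (Real.strictMonoOn_sin.monotoneOn) ⟨by linarith, ht0le⟩
          ⟨by linarith [ht.1, ht00], ht.2⟩ ht.1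
      have hsin_t0_nn : 0 ≤ Real.sin t0 := by rw [hsin_t0]; exact Real.sqrt_nonneg _
      have hs2 : s0 ≤ Real.sin t ^ 2 := by
        rw [← hsin2]; exact pow_le_pow_left₀ hsin_t0_nn hsint 2
      have hA' : κ * s0 ≤ 1 + κ * Real.sin t ^ 2 := by nlinarith only [hκ0, hs2]
      have hB0 : 0 < Real.sqrt (1 - m * Real.sin t ^ 2) := Real.sqrt_pos.2 (pos_aux hm1 t)
      have hfle : f t ≤ 1/((κ*s0) * Real.sqrt (1 - m * Real.sin t ^ 2)) := by
        rw [hf_def]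
        apply one_div_le_one_div_of_le (mul_pos hκs0 hB0)
        exact mul_le_mul_of_nonneg_right hA' hB0.le
      calc f t ≤ 1/((κ*s0) * Real.sqrt (1 - m * Real.sin t ^ 2)) := hfle
        _ = (1/(κ*s0)) * (1/Real.sqrt (1 - m * Real.sin t ^ 2)) := by rw [one_div_mul_one_div]
    have hβ0 : 0 < b/a := div_pos hb ha
    have hβ1 : b/a ≤ 1 := by rw [div_le_one ha]; exact hba
    have hK : (∫ t in (0:ℝ)..(π/2), 1/Real.sqrt (1 - m * Real.sin t ^ 2))
        ≤ π/2 * (1 + Real.log (1/(b/a)) / 2) := by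
      have := H2 hβ0 hβ1
      have hmm : (1 : ℝ) - b/a = m := by linarith [hm']
      rw [hmm] at this
      exact this
    have hKtail : (∫ t in t0..(π/2), 1/Real.sqrt (1 - m * Real.sin t ^ 2))
        ≤ π/2 * (1 + Real.log (1/(b/a)) / 2) := by
      have hsplit2 := intervalIntegral.integral_add_adjacent_intervals
        ((cont2 hm1).intervalIntegrable (μ := MeasureTheory.volume) 0 t0)
        ((cont2 hm1).intervalIntegrable (μ := MeasureTheory.volume) t0 (π/2))
      have hhead : 0 ≤ ∫ t in (0:ℝ)..t0, 1/Real.sqrt (1 - m * Real.sin t ^ 2) := by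
        apply intervalIntegral.integral_nonneg ht00
        intro t _
        positivity
      linarith [hK, hsplit2]
    have hI2 : (∫ t in t0..(π/2), f t) ≤ (1/(κ*s0)) * (π/2 * (1 + Real.log (1/(b/a)) / 2)) := by
      have hmono := intervalIntegral.integral_mono_on ht0le (hf_int t0 (π/2))
        ((continuous_const.mul (cont2 hm1)).intervalIntegrable t0 (π/2)) pw2
      simp only [Pi.mul_apply] at hmono
      rw [intervalIntegral.integral_const_mul] at hmono
      calc (∫ t in t0..(π/2), f t)
          ≤ (1/(κ*s0)) * ∫ t in t0..(π/2), 1/Real.sqrt (1 - m * Real.sin t ^ 2) := hmono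
        _ ≤ (1/(κ*s0)) * (π/2 * (1 + Real.log (1/(b/a)) / 2)) :=
            mul_le_mul_of_nonneg_left hKtail (one_div_nonneg.2 hκs0.le)
    -- bound the log term :  1 + L/2 ≤ 4q
    have hab2 : a/b ≤ a^2 := by
      rw [div_le_iff₀ hb]; nlinarith only [hab, ha]
    have hL : Real.log (1/(b/a)) ≤ 2 * Real.log a := by
      rw [one_div_div]
      calc Real.log (a/b) ≤ Real.log (a^2) := Real.log_le_log (by positivity) hab2
        _ = 2 * Real.log a := by rw [Real.log_pow]; norm_num
    have hlogq : Real.log a = 4 * Real.log q := by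
      rw [← hq4, Real.log_pow]; norm_num
    have hlogq' : Real.log q ≤ q - 1 := Real.log_le_sub_one_of_pos hq0
    have hLbound : 1 + Real.log (1/(b/a)) / 2 ≤ 4*q - 3 := by
      rw [hlogq] at hL
      linarith
    have h4q : (0:ℝ) < 4*q - 3 := by linarith
    -- 1/(κ s0) = c/(d s0)  and  d * s0 ≥ ε q²
    have haq : a * s0 = q^2 := by rw [← hq4]; linear_combination q^2 * hs0q
    have hds0 : ε * q^2 ≤ d * s0 := by
      have h := mul_le_mul_of_nonneg_right hd_ge hs00.le
      calc ε * q^2 = ε * (a * s0) := by rw [haq]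
        _ = ε * a * s0 := by ring
        _ ≤ d * s0 := h
    have hεq : 0 < ε * q := mul_pos hε0 hq0
    have hεq2 : 0 < ε * q^2 := mul_pos hε0 (pow_pos hq0 2)
    have hκinv : 1/(κ * s0) = c/(d * s0) := by
      rw [hκ_def, div_mul_eq_mul_div, one_div_div]
    have hpc : 0 < π * c / 2 := by linarith only [mul_pos hpi hc0]
    -- final bound on part 2
    have hI2fin : (∫ t in t0..(π/2), f t) ≤ (π * c / 2) * (4/(ε*q)) := by
      have h1 : (∫ t in t0..(π/2), f t) ≤ (c/(d*s0)) * (π/2 * (1 + Real.log (1/(b/a)) / 2)) := by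
        rw [← hκinv]; exact hI2
      have hds0pos : 0 < d * s0 := mul_pos hdpos hs00
      have h2 : π/2 * (1 + Real.log (1/(b/a)) / 2) ≤ π/2 * (4*q - 3) := by
        apply mul_le_mul_of_nonneg_left hLbound (by positivity)
      have h3 : (c/(d*s0)) * (π/2 * (1 + Real.log (1/(b/a)) / 2))
          ≤ (c/(d*s0)) * (π/2 * (4*q - 3)) :=
        mul_le_mul_of_nonneg_left h2 (div_nonneg hc0.le hds0pos.le)
      have h4 : (4*q - 3)/(d*s0) ≤ (4*q)/(ε*q^2) :=
        div_le_div₀ (by linarith) (by linarith) hεq2 hds0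
      have h5 : (4*q)/(ε*q^2) = 4/(ε*q) := by
        field_simp
      have h6 : (c/(d*s0)) * (π/2 * (4*q - 3)) ≤ (π * c / 2) * (4/(ε*q)) := by
        rw [← h5]
        have e : (c/(d*s0)) * (π/2 * (4*q - 3)) = (π * c/2) * ((4*q - 3)/(d*s0)) := by
          ring
        rw [e]
        exact mul_le_mul_of_nonneg_left h4 hpc.le
      linarith
    -- final bound on part 1
    have hsr : 0 < Real.sqrt (1 - s0) := Real.sqrt_pos.2 (by linarith)
    have hsq' : (Real.sqrt (1 - s0))^2 = 1 - s0 := Real.sq_sqrt (by linarith)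
    have hge : 1 ≤ (1 + s0)^2 * (1 - s0) := by nlinarith only [hs00, hs0le, sq_nonneg s0, mul_pos hs00 hs00]
    have hsq2 : ((1 + s0) * Real.sqrt (1 - s0))^2 = (1 + s0)^2 * (1 - s0) := by
      rw [mul_pow, hsq']
    have hXnn : 0 ≤ (1 + s0) * Real.sqrt (1 - s0) :=
      mul_nonneg (by linarith) hsr.le
    have key1 : 1 ≤ (1 + s0) * Real.sqrt (1 - s0) := by
      nlinarith only [hsq2, hge, hXnn]
    have h1s : 1/Real.sqrt (1 - s0) ≤ 1 + s0 := by
      rw [div_le_iff₀ hsr]; linarith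
    have hI1fin : (∫ t in (0:ℝ)..t0, f t) ≤ (π * c / 2) * (1 + s0) := by
      calc (∫ t in (0:ℝ)..t0, f t) ≤ (1/Real.sqrt (1-s0)) * (π * c / 2) := hI1
        _ ≤ (1 + s0) * (π * c / 2) := mul_le_mul_of_nonneg_right h1s hpc.le
        _ = (π * c / 2) * (1 + s0) := by ring
    -- total integral bound
    have hEq4 : 0 < 4/(ε*q) := by positivity
    have hEpos : 0 ≤ (1 + s0) + 4/(ε*q) := by linarith
    have hItot : I ≤ (π * c / 2) * ((1 + s0) + 4/(ε*q)) := by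
      rw [hsplit, mul_add]
      exact add_le_add hI1fin hI2fin
    -- bound on muC
    have hq2pos : (0:ℝ) < q^2 := pow_pos hq0 2
    have hqq : q^2 * (1/q^2) = 1 := by field_simp
    have hmuq : muC a b ≤ q^2 + 1/q^2 := by
      apply le_of_pow_le_pow_left₀ two_ne_zero (by positivity)
      rw [hmu2]
      nlinarith only [hq4, hc1, hqq, sq_nonneg (1/q^2)]
    -- the decisive polynomial estimate
    have hε2y : 0 < ε * (2*y - 1) := mul_pos hε0 (by linarith)
    have hq11 : 11 < ε * (2*y - 1) * q := by
      have := (div_lt_iff₀ hε2y).1 (by rw [← hZ_def]; exact hqZ)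
      linarith only [this]
    have hq5pos : (0:ℝ) < q^5 := pow_pos hq0 5
    have hq45 : q^4 ≤ q^5 := pow_le_pow_right₀ hq1.le (by norm_num)
    have hq25 : q^2 ≤ q^5 := pow_le_pow_right₀ hq1.le (by norm_num)
    have hq15 : q ≤ q^5 := by
      calc q = q^1 := (pow_one q).symm
        _ ≤ q^5 := pow_le_pow_right₀ hq1.le (by norm_num)
    have hq05 : (1:ℝ) ≤ q^5 := by linarith only [hq15, hq1]
    have hpoly : (q^4+1)*(ε*q^2+ε+4*q) < 2*y*ε*q^6 := by
      have hmul : 11*q^5 < ε*(2*y-1)*q*q^5 := mul_lt_mul_of_pos_right hq11 hq5pos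
      have hεq4 : ε*q^4 ≤ q^5 := by linarith only [mul_le_mul_of_nonneg_right hε1.le (pow_pos hq0 4).le, hq45]
      have hεq2' : ε*q^2 ≤ q^5 := by linarith only [mul_le_mul_of_nonneg_right hε1.le (pow_pos hq0 2).le, hq25]
      have hε5 : ε ≤ q^5 := by linarith only [hε1, hq05]
      linarith only [hmul, hεq4, hεq2', hε5, hq15]
    have hqE : (q^2 + 1/q^2) * ((1 + s0) + 4/(ε*q)) < 2*y*q^2 := by
      have hrewrite : (q^2 + 1/q^2) * ((1 + s0) + 4/(ε*q)) = (q^4+1)*(ε*q^2+ε+4*q)/(ε*q^4) := by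
        rw [hs0_def]
        field_simp
      rw [hrewrite, div_lt_iff₀ (mul_pos hε0 (pow_pos hq0 4))]
      linarith only [hpoly]
    calc muC a b * I ≤ muC a b * ((π * c / 2) * ((1 + s0) + 4/(ε*q))) :=
          mul_le_mul_of_nonneg_left hItot hmu0.le
      _ ≤ (q^2 + 1/q^2) * ((π * c / 2) * ((1 + s0) + 4/(ε*q))) :=
          mul_le_mul_of_nonneg_right hmuq (mul_nonneg hpc.le hEpos)
      _ = (π * c / 2) * ((q^2 + 1/q^2) * ((1 + s0) + 4/(ε*q))) := by ring
      _ < (π * c / 2) * (2*y*q^2) := mul_lt_mul_of_pos_left hqE hpc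
      _ = y * (π * sa * c) := by rw [← hq2]; ring

end Helpers

/-- For every real `x` with `-1/√2 < x < -1/2`, the set
`{(a,b) : a ≥ b > 0, ab ≥ 1, Φ₁(a,b) = x}` is compact. -/
theorem stmt_13 (x : ℝ) (hx1 : -(1 / Real.sqrt 2) < x) (hx2 : x < -(1/2)) :
    IsCompact {p : ℝ × ℝ |
      p.2 ≤ p.1 ∧ 0 < p.2 ∧ 1 ≤ p.1 * p.2 ∧ Phi1 p.1 p.2 = x} := by
  obtain ⟨M, hM1, hM⟩ := phi1_gt hx2
  have hCpos : ∀ p : ℝ × ℝ, p.2 ≤ p.1 → 0 ≤ p.2 → 1 ≤ p.1 * p.2 → 0 < p.2 := by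
    intro p h1 h2 h3
    rcases h2.lt_or_eq with h | h
    · exact h
    · exfalso; rw [← h] at h3; simp at h3; linarith
  have hCclosed : IsClosed {p : ℝ × ℝ | p.2 ≤ p.1 ∧ 0 ≤ p.2 ∧ 1 ≤ p.1 * p.2} :=
    (isClosed_le continuous_snd continuous_fst).inter
      ((isClosed_le continuous_const continuous_snd).inter
        (isClosed_le continuous_const (continuous_fst.mul continuous_snd)))
  have hseq : {p : ℝ × ℝ | p.2 ≤ p.1 ∧ 0 < p.2 ∧ 1 ≤ p.1 * p.2 ∧ Phi1 p.1 p.2 = x}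
      = {p : ℝ × ℝ | p.2 ≤ p.1 ∧ 0 ≤ p.2 ∧ 1 ≤ p.1 * p.2} ∩
        ((fun p : ℝ × ℝ => Phi1 p.1 p.2) ⁻¹' {x}) := by
    ext p
    constructor
    · rintro ⟨h1, h2, h3, h4⟩
      exact ⟨⟨h1, h2.le, h3⟩, h4⟩
    · rintro ⟨⟨h1, h2, h3⟩, h4⟩
      exact ⟨h1, hCpos p h1 h2 h3, h3, h4⟩
  have hsubU : {p : ℝ × ℝ | p.2 ≤ p.1 ∧ 0 ≤ p.2 ∧ 1 ≤ p.1 * p.2}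
      ⊆ {p : ℝ × ℝ | 0 < p.1 ∧ 0 < p.2} := by
    rintro p ⟨h1, h2, h3⟩
    have hb := hCpos p h1 h2 h3
    exact ⟨hb.trans_le h1, hb⟩
  have hclosed : IsClosed {p : ℝ × ℝ |
      p.2 ≤ p.1 ∧ 0 < p.2 ∧ 1 ≤ p.1 * p.2 ∧ Phi1 p.1 p.2 = x} := by
    rw [hseq]
    exact (phi1_contOn.mono hsubU).preimage_isClosed_of_isClosed hCclosed isClosed_singleton
  apply IsCompact.of_isClosed_subset
    ((isCompact_Icc (a := -M) (b := M)).prod (isCompact_Icc (a := -M) (b := M)))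
    hclosed
  rintro p ⟨h1, h2, h3, h4⟩
  have ha : 0 < p.1 := h2.trans_le h1
  have haM : p.1 ≤ M := by
    by_contra h
    push_neg at h
    exact absurd h4 (ne_of_gt (by simpa [h4] using hM p.1 p.2 h1 h2 h3 h.le))
  constructor
  · exact ⟨by linarith, haM⟩
  · exact ⟨by linarith, by linarith⟩
end

section
/- For every point (x, y) ∈ Ω̃, the level set {(a,b) ∈ Σ : Φ₂(a,b) = y} is a connected subset of ℝ². -/
open Real Filter

noncomputable def eF (β t : ℝ) : ℝ := β⁻¹ * Real.cos t ^ 2 + β * Real.sin t ^ 2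

lemma beta_le_inv {β : ℝ} (hβ : 0 < β) (hβ1 : β < 1) : β ≤ β⁻¹ := by
  have h1 : β * β⁻¹ = 1 := mul_inv_cancel₀ hβ.ne'
  nlinarith

lemma eF_pos {β : ℝ} (hβ : 0 < β) (hβ1 : β < 1) (t : ℝ) : 0 < eF β t := by
  have h := Real.sin_sq_add_cos_sq t
  have hc : β * eF β t = Real.cos t ^ 2 + β ^ 2 * Real.sin t ^ 2 := by
    unfold eF; field_simp
  have h2 : 0 < β * eF β t := by
    rw [hc]
    nlinarith [sq_nonneg (Real.sin t), sq_nonneg (Real.cos t), sq_nonneg (β * Real.sin t),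
      mul_pos hβ hβ]
  exact (mul_pos_iff_of_pos_left hβ).mp h2

lemma le_eF {β : ℝ} (hβ : 0 < β) (hβ1 : β < 1) (t : ℝ) : β ≤ eF β t := by
  have h := Real.sin_sq_add_cos_sq t
  have hβi := beta_le_inv hβ hβ1
  unfold eF
  nlinarith [sq_nonneg (Real.sin t), sq_nonneg (Real.cos t)]

lemma eF_le {β : ℝ} (hβ : 0 < β) (hβ1 : β < 1) (t : ℝ) : eF β t ≤ β⁻¹ := by
  have h := Real.sin_sq_add_cos_sq t
  have hβi := beta_le_inv hβ hβ1
  unfold eF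
  nlinarith [sq_nonneg (Real.sin t), sq_nonneg (Real.cos t)]

/-- The integrand. -/
noncomputable def Jf (ν β t : ℝ) : ℝ := ν / (eF β t * Real.sqrt (ν ^ 2 + eF β t))

noncomputable def Hf (ν β : ℝ) : ℝ := (1 / π) * ∫ t in (0:ℝ)..(π / 2), Jf ν β t

lemma sqrt_term_pos {ν β : ℝ} (hβ : 0 < β) (hβ1 : β < 1) (t : ℝ) :
    0 < Real.sqrt (ν ^ 2 + eF β t) :=
  Real.sqrt_pos.mpr (by nlinarith [sq_nonneg ν, eF_pos hβ hβ1 t])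

lemma Jf_cont {ν β : ℝ} (hβ : 0 < β) (hβ1 : β < 1) :
    Continuous fun t => Jf ν β t := by
  have hc : Continuous fun t => eF β t := by
    unfold eF; fun_prop
  apply Continuous.div continuous_const
  · exact hc.mul ((continuous_const.add hc).sqrt)
  · intro t
    exact (mul_pos (eF_pos hβ hβ1 t) (sqrt_term_pos hβ hβ1 t)).ne'

lemma Jf_mono {ν₁ ν₂ β : ℝ} (hβ : 0 < β) (hβ1 : β < 1) (h1 : 0 ≤ ν₁) (h12 : ν₁ ≤ ν₂)
    (t : ℝ) : Jf ν₁ β t ≤ Jf ν₂ β t := by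
  have he := eF_pos hβ hβ1 t
  set e := eF β t
  have hs1 := Real.sq_sqrt (by nlinarith [sq_nonneg ν₁] : (0:ℝ) ≤ ν₁ ^ 2 + e)
  have hs2 := Real.sq_sqrt (by nlinarith [sq_nonneg ν₂] : (0:ℝ) ≤ ν₂ ^ 2 + e)
  have hp1 : 0 < Real.sqrt (ν₁ ^ 2 + e) := Real.sqrt_pos.mpr (by nlinarith [sq_nonneg ν₁])
  have hp2 : 0 < Real.sqrt (ν₂ ^ 2 + e) := Real.sqrt_pos.mpr (by nlinarith [sq_nonneg ν₂])
  have key : ν₁ * Real.sqrt (ν₂ ^ 2 + e) ≤ ν₂ * Real.sqrt (ν₁ ^ 2 + e) := by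
    apply le_of_pow_le_pow_left₀ two_ne_zero (mul_nonneg (h1.trans h12) hp1.le)
    have expand1 : (ν₁ * Real.sqrt (ν₂ ^ 2 + e)) ^ 2 = ν₁ ^ 2 * (ν₂ ^ 2 + e) := by
      rw [mul_pow, hs2]
    have expand2 : (ν₂ * Real.sqrt (ν₁ ^ 2 + e)) ^ 2 = ν₂ ^ 2 * (ν₁ ^ 2 + e) := by
      rw [mul_pow, hs1]
    rw [expand1, expand2]
    nlinarith [mul_le_mul_of_nonneg_right (pow_le_pow_left₀ h1 h12 2) he.le]
  unfold Jf
  rw [div_le_div_iff₀ (by positivity) (by positivity)]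
  nlinarith [key, he.le]

lemma Jf_strict_mono {ν₁ ν₂ β : ℝ} (hβ : 0 < β) (hβ1 : β < 1) (h1 : 0 < ν₁) (h12 : ν₁ < ν₂)
    (t : ℝ) : Jf ν₁ β t < Jf ν₂ β t := by
  have he := eF_pos hβ hβ1 t
  set e := eF β t
  have hs1 := Real.sq_sqrt (by nlinarith [sq_nonneg ν₁] : (0:ℝ) ≤ ν₁ ^ 2 + e)
  have hs2 := Real.sq_sqrt (by nlinarith [sq_nonneg ν₂] : (0:ℝ) ≤ ν₂ ^ 2 + e)
  have hp1 : 0 < Real.sqrt (ν₁ ^ 2 + e) := Real.sqrt_pos.mpr (by nlinarith [sq_nonneg ν₁])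
  have hp2 : 0 < Real.sqrt (ν₂ ^ 2 + e) := Real.sqrt_pos.mpr (by nlinarith [sq_nonneg ν₂])
  have key : ν₁ * Real.sqrt (ν₂ ^ 2 + e) < ν₂ * Real.sqrt (ν₁ ^ 2 + e) := by
    have hnn : 0 ≤ ν₁ * Real.sqrt (ν₂ ^ 2 + e) := mul_nonneg h1.le hp2.le
    apply lt_of_pow_lt_pow_left₀ 2 (mul_nonneg (h1.trans h12).le hp1.le)
    have expand1 : (ν₁ * Real.sqrt (ν₂ ^ 2 + e)) ^ 2 = ν₁ ^ 2 * (ν₂ ^ 2 + e) := by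
      rw [mul_pow, hs2]
    have expand2 : (ν₂ * Real.sqrt (ν₁ ^ 2 + e)) ^ 2 = ν₂ ^ 2 * (ν₁ ^ 2 + e) := by
      rw [mul_pow, hs1]
    rw [expand1, expand2]
    nlinarith [mul_lt_mul_of_pos_right (by nlinarith : ν₁ ^ 2 < ν₂ ^ 2) he]
  unfold Jf
  rw [div_lt_div_iff₀ (by positivity) (by positivity)]
  nlinarith [key, he]

lemma Dn_pos {k : ℝ} (hk : 0 < k) (t : ℝ) : 0 < Real.cos t ^ 2 + k * Real.sin t ^ 2 := by
  have h := Real.sin_sq_add_cos_sq t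
  nlinarith [sq_nonneg (Real.sin t), sq_nonneg (Real.cos t),
    mul_nonneg hk.le (sq_nonneg (Real.sin t)), mul_nonneg hk.le (sq_nonneg (Real.cos t))]

lemma Dn2_pos {k : ℝ} (hk : 0 < k) (t : ℝ) : 0 < Real.cos t ^ 2 + k ^ 2 * Real.sin t ^ 2 :=
  Dn_pos (by positivity) t

lemma hasDerivAt_A {k : ℝ} (hk : 0 < k) (t : ℝ) :
    HasDerivAt (fun u => (1 / k) * (u + Real.arctan ((k - 1) * (Real.sin u * Real.cos u) /
      (Real.cos u ^ 2 + k * Real.sin u ^ 2))))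
      ((Real.cos t ^ 2 + k ^ 2 * Real.sin t ^ 2)⁻¹) t := by
  have hD := Dn_pos hk t
  have hN : HasDerivAt (fun u => (k - 1) * (Real.sin u * Real.cos u))
      ((k - 1) * (Real.cos t * Real.cos t + Real.sin t * (-Real.sin t))) t :=
    ((Real.hasDerivAt_sin t).mul (Real.hasDerivAt_cos t)).const_mul _
  have hDen : HasDerivAt (fun u => Real.cos u ^ 2 + k * Real.sin u ^ 2)
      (2 * Real.cos t ^ 1 * (-Real.sin t) + k * (2 * Real.sin t ^ 1 * Real.cos t)) t := by
    have h1 : HasDerivAt (fun u => Real.cos u ^ 2) (2 * Real.cos t ^ 1 * (-Real.sin t)) t :=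
      (Real.hasDerivAt_cos t).pow 2
    have h2 : HasDerivAt (fun u => Real.sin u ^ 2) (2 * Real.sin t ^ 1 * Real.cos t) t :=
      (Real.hasDerivAt_sin t).pow 2
    exact h1.add (h2.const_mul k)
  have hq : HasDerivAt (fun u => (k - 1) * (Real.sin u * Real.cos u) /
      (Real.cos u ^ 2 + k * Real.sin u ^ 2))
      (((k - 1) * (Real.cos t * Real.cos t + Real.sin t * (-Real.sin t)) *
          (Real.cos t ^ 2 + k * Real.sin t ^ 2) -
        (k - 1) * (Real.sin t * Real.cos t) *
          (2 * Real.cos t ^ 1 * (-Real.sin t) + k * (2 * Real.sin t ^ 1 * Real.cos t))) /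
        (Real.cos t ^ 2 + k * Real.sin t ^ 2) ^ 2) t := hN.div hDen hD.ne'
  have harc := hq.arctan
  have hA := ((hasDerivAt_id t).add harc).const_mul (1 / k)
  refine hA.congr_deriv (Eq.symm ?_)
  have hpy := Real.sin_sq_add_cos_sq t
  have h2D := Dn2_pos hk t
  set s := Real.sin t
  set c := Real.cos t
  have hsum : ((c ^ 2 + k * s ^ 2) ^ 2 + ((k - 1) * (s * c)) ^ 2) = (c ^ 2 + k ^ 2 * s ^ 2) := by
    nlinarith [hpy]
  rw [eq_comm]
  have h1q : 1 + ((k - 1) * (s * c) / (c ^ 2 + k * s ^ 2)) ^ 2 =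
      (c ^ 2 + k ^ 2 * s ^ 2) / (c ^ 2 + k * s ^ 2) ^ 2 := by
    field_simp
    linarith [hsum]
  rw [h1q]
  field_simp
  linear_combination ((k - 1) * c ^ 2 + k - k * (k - 1) * s ^ 2) * hpy

lemma integral_inv_cos_sq_add_sq_sin_sq {k : ℝ} (hk : 0 < k) :
    ∫ t in (0:ℝ)..(π / 2), (Real.cos t ^ 2 + k ^ 2 * Real.sin t ^ 2)⁻¹ = π / (2 * k) := by
  have hcont : Continuous fun t => (Real.cos t ^ 2 + k ^ 2 * Real.sin t ^ 2)⁻¹ := by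
    apply Continuous.inv₀ (by fun_prop)
    intro t; exact (Dn2_pos hk t).ne'
  rw [intervalIntegral.integral_eq_sub_of_hasDerivAt
    (fun t _ => hasDerivAt_A hk t) (hcont.intervalIntegrable _ _)]
  have h1 : Real.sin (π / 2) = 1 := Real.sin_pi_div_two
  have h2 : Real.cos (π / 2) = 0 := Real.cos_pi_div_two
  have h3 : Real.sin 0 = 0 := Real.sin_zero
  have h4 : Real.cos 0 = 1 := Real.cos_zero
  simp only [h1, h2, h3, h4]
  rw [show (k - 1) * (1 * 0) / (0 ^ 2 + k * 1 ^ 2) = 0 by ring,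
      show (k - 1) * (0 * 1) / (1 ^ 2 + k * 0 ^ 2) = 0 by ring]
  simp [Real.arctan_zero]
  field_simp

lemma integral_inv_eF {β : ℝ} (hβ : 0 < β) (hβ1 : β < 1) :
    ∫ t in (0:ℝ)..(π / 2), (eF β t)⁻¹ = π / 2 := by
  have hcongr : ∀ t : ℝ, (eF β t)⁻¹ = β * (Real.cos t ^ 2 + β ^ 2 * Real.sin t ^ 2)⁻¹ := by
    intro t
    have hD := Dn2_pos hβ t
    have : eF β t = β⁻¹ * (Real.cos t ^ 2 + β ^ 2 * Real.sin t ^ 2) := by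
      unfold eF; field_simp
    rw [this]
    field_simp
  simp only [hcongr]
  rw [intervalIntegral.integral_const_mul, integral_inv_cos_sq_add_sq_sin_sq hβ]
  field_simp

lemma Hf_cont_nu {β : ℝ} (hβ : 0 < β) (hβ1 : β < 1) : Continuous fun ν => Hf ν β := by
  apply Continuous.mul continuous_const
  apply intervalIntegral.continuous_parametric_intervalIntegral_of_continuous'
  have : Continuous fun p : ℝ × ℝ => Jf p.1 β p.2 := by
    unfold Jf
    apply Continuous.div
    · fun_prop
    · apply Continuous.mul
      · unfold eF; fun_prop
      · apply Continuous.sqrt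
        unfold eF; fun_prop
    · intro p
      exact (mul_pos (eF_pos hβ hβ1 p.2) (sqrt_term_pos hβ hβ1 p.2)).ne'
  exact this

lemma Hf_contOn_beta (ν : ℝ) : ContinuousOn (fun β => Hf ν β) (Set.Ioo 0 1) := by
  rw [continuousOn_iff_continuous_restrict]
  apply Continuous.mul continuous_const
  apply intervalIntegral.continuous_parametric_intervalIntegral_of_continuous'
    (f := fun (x : Set.Ioo (0:ℝ) 1) t => Jf ν x.val t)
  have hval : Continuous fun x : Set.Ioo (0:ℝ) 1 => (x : ℝ) := continuous_subtype_val
  have hinv : Continuous fun x : Set.Ioo (0:ℝ) 1 => (x : ℝ)⁻¹ :=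
    hval.inv₀ fun x => (x.2.1).ne'
  have heC : Continuous fun p : Set.Ioo (0:ℝ) 1 × ℝ => eF p.1.val p.2 := by
    unfold eF
    exact ((hinv.comp continuous_fst).mul (by fun_prop)).add
      ((hval.comp continuous_fst).mul (by fun_prop))
  apply Continuous.div
  · fun_prop
  · exact heC.mul ((continuous_const.add heC).sqrt)
  · intro p
    exact (mul_pos (eF_pos p.1.2.1 p.1.2.2 p.2) (sqrt_term_pos p.1.2.1 p.1.2.2 p.2)).ne'

lemma pi_div_two_pos' : (0:ℝ) < π / 2 := by positivity

lemma Jf_intervalIntegrable {ν β : ℝ} (hβ : 0 < β) (hβ1 : β < 1) :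
    IntervalIntegrable (fun t => Jf ν β t) MeasureTheory.volume 0 (π / 2) :=
  (Jf_cont hβ hβ1).intervalIntegrable _ _

lemma Hf_mono {ν₁ ν₂ β : ℝ} (hβ : 0 < β) (hβ1 : β < 1) (h1 : 0 ≤ ν₁) (h12 : ν₁ ≤ ν₂) :
    Hf ν₁ β ≤ Hf ν₂ β := by
  unfold Hf
  apply mul_le_mul_of_nonneg_left _ (by positivity)
  apply intervalIntegral.integral_mono_on pi_div_two_pos'.le
    (Jf_intervalIntegrable hβ hβ1) (Jf_intervalIntegrable hβ hβ1)
  exact fun t _ => Jf_mono hβ hβ1 h1 h12 t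

lemma Hf_strict_mono {ν₁ ν₂ β : ℝ} (hβ : 0 < β) (hβ1 : β < 1) (h1 : 0 < ν₁) (h12 : ν₁ < ν₂) :
    Hf ν₁ β < Hf ν₂ β := by
  unfold Hf
  apply mul_lt_mul_of_pos_left _ (by positivity)
  apply intervalIntegral.integral_lt_integral_of_continuousOn_of_le_of_exists_lt
    pi_div_two_pos' (Jf_cont hβ hβ1).continuousOn (Jf_cont hβ hβ1).continuousOn
    (fun t _ => (Jf_strict_mono hβ hβ1 h1 h12 t).le)
  exact ⟨0, Set.left_mem_Icc.mpr pi_div_two_pos'.le, Jf_strict_mono hβ hβ1 h1 h12 0⟩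

lemma Hf_le {ν β : ℝ} (hβ : 0 < β) (hβ1 : β < 1) (hν : 0 ≤ ν) :
    Hf ν β ≤ ν / (2 * β * Real.sqrt β) := by
  have hsβ : 0 < Real.sqrt β := Real.sqrt_pos.mpr hβ
  have hb : ∀ t ∈ Set.Icc (0:ℝ) (π/2), Jf ν β t ≤ ν / (β * Real.sqrt β) := by
    intro t _
    have he := eF_pos hβ hβ1 t
    have hle := le_eF hβ hβ1 t
    have hst := sqrt_term_pos (ν := ν) hβ hβ1 t
    have hs2 : Real.sqrt β ≤ Real.sqrt (ν ^ 2 + eF β t) :=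
      Real.sqrt_le_sqrt (by nlinarith [sq_nonneg ν])
    unfold Jf
    apply div_le_div_of_nonneg_left hν (by positivity)
    calc β * Real.sqrt β ≤ eF β t * Real.sqrt β := by nlinarith
      _ ≤ eF β t * Real.sqrt (ν ^ 2 + eF β t) := by nlinarith
  have := intervalIntegral.integral_mono_on pi_div_two_pos'.le
    (Jf_intervalIntegrable (ν := ν) hβ hβ1)
    (intervalIntegrable_const) hb
  rw [intervalIntegral.integral_const] at this
  unfold Hf
  have hπ : (0:ℝ) < π := Real.pi_pos
  calc (1/π) * ∫ t in (0:ℝ)..(π/2), Jf ν β t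
      ≤ (1/π) * ((π/2 - 0) • (ν / (β * Real.sqrt β))) := by
        apply mul_le_mul_of_nonneg_left this (by positivity)
    _ = ν / (2 * β * Real.sqrt β) := by
        rw [smul_eq_mul]
        rw [show (1:ℝ)/π * ((π/2 - 0) * (ν / (β * Real.sqrt β))) =
          (π * (1/π)) * (ν / (2 * β * Real.sqrt β)) by ring,
          mul_one_div_cancel hπ.ne', one_mul]

lemma Hf_ge {ν β : ℝ} (hβ : 0 < β) (hβ1 : β < 1) (hν : 0 ≤ ν) :
    ν / Real.sqrt (ν ^ 2 + β⁻¹) / 2 ≤ Hf ν β := by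
  have hβi : 0 < β⁻¹ := inv_pos.mpr hβ
  have hQ : 0 < Real.sqrt (ν ^ 2 + β⁻¹) := Real.sqrt_pos.mpr (by nlinarith [sq_nonneg ν])
  set C := ν / Real.sqrt (ν ^ 2 + β⁻¹) with hC
  have hC0 : 0 ≤ C := by positivity
  have hb : ∀ t ∈ Set.Icc (0:ℝ) (π/2), C * (eF β t)⁻¹ ≤ Jf ν β t := by
    intro t _
    have he := eF_pos hβ hβ1 t
    have hle := eF_le hβ hβ1 t
    have hst := sqrt_term_pos (ν := ν) hβ hβ1 t
    have hs2 : Real.sqrt (ν ^ 2 + eF β t) ≤ Real.sqrt (ν ^ 2 + β⁻¹) :=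
      Real.sqrt_le_sqrt (by nlinarith)
    unfold Jf
    rw [hC, div_mul_eq_mul_div, div_le_div_iff₀ (by positivity) (by positivity)]
    have h1 : ν * (eF β t)⁻¹ * (eF β t) = ν := by field_simp
    calc ν * (eF β t)⁻¹ * (eF β t * Real.sqrt (ν ^ 2 + eF β t))
        = ν * Real.sqrt (ν ^ 2 + eF β t) := by field_simp
      _ ≤ ν * Real.sqrt (ν ^ 2 + β⁻¹) := by nlinarith
  have hcontinv : Continuous fun t => (eF β t)⁻¹ := by
    apply Continuous.inv₀ (by unfold eF; fun_prop) (fun t => (eF_pos hβ hβ1 t).ne')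
  have hmono := intervalIntegral.integral_mono_on pi_div_two_pos'.le
    ((continuous_const.mul hcontinv).intervalIntegrable _ _)
    (Jf_intervalIntegrable (ν := ν) hβ hβ1) hb
  simp only [Pi.mul_apply] at hmono
  rw [intervalIntegral.integral_const_mul, integral_inv_eF hβ hβ1] at hmono
  unfold Hf
  have hπ : (0:ℝ) < π := Real.pi_pos
  calc ν / Real.sqrt (ν ^ 2 + β⁻¹) / 2 = (1/π) * (C * (π/2)) := by
        rw [hC]
        field_simp
    _ ≤ (1/π) * ∫ t in (0:ℝ)..(π/2), Jf ν β t := by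
        apply mul_le_mul_of_nonneg_left hmono (by positivity)

lemma exists_solution {β y : ℝ} (hβ : 0 < β) (hβ1 : β < 1) (hy : 0 < y) (hy2 : y < 1/2) :
    ∃ ν, 0 < ν ∧ Hf ν β = y := by
  have hsβ : 0 < Real.sqrt β := Real.sqrt_pos.mpr hβ
  set ν₀ := y * β * Real.sqrt β with hν₀def
  have hν₀ : 0 < ν₀ := by positivity
  have hlow : Hf ν₀ β < y := by
    have := Hf_le hβ hβ1 hν₀.le
    have heq : ν₀ / (2 * β * Real.sqrt β) = y / 2 := by
      rw [hν₀def]; field_simp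
    rw [heq] at this
    linarith
  have hd : 0 < 1 - 4 * y ^ 2 := by nlinarith
  have hβi : 0 < β⁻¹ := inv_pos.mpr hβ
  set R := Real.sqrt (4 * y ^ 2 * β⁻¹ / (1 - 4 * y ^ 2)) with hRdef
  have hR : 0 ≤ R := Real.sqrt_nonneg _
  have hR2 : R ^ 2 = 4 * y ^ 2 * β⁻¹ / (1 - 4 * y ^ 2) := Real.sq_sqrt (by positivity)
  set ν₁ := R + 1 with hν₁def
  have hν₁ : 0 < ν₁ := by positivity
  have hhigh : y < Hf ν₁ β := by
    have hge := Hf_ge hβ hβ1 hν₁.le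
    have hQ : 0 < Real.sqrt (ν₁ ^ 2 + β⁻¹) := Real.sqrt_pos.mpr (by positivity)
    have hQ2 : Real.sqrt (ν₁ ^ 2 + β⁻¹) ^ 2 = ν₁ ^ 2 + β⁻¹ := Real.sq_sqrt (by positivity)
    have hkey : 2 * y * Real.sqrt (ν₁ ^ 2 + β⁻¹) < ν₁ := by
      apply lt_of_pow_lt_pow_left₀ 2 hν₁.le
      have hexp : (2 * y * Real.sqrt (ν₁ ^ 2 + β⁻¹)) ^ 2 = 4 * y ^ 2 * (ν₁ ^ 2 + β⁻¹) := by
        rw [mul_pow, mul_pow, hQ2]; ring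
      rw [hexp]
      have hR2d : R ^ 2 * (1 - 4 * y ^ 2) = 4 * y ^ 2 * β⁻¹ := by
        rw [hR2]; field_simp
      nlinarith [sq_nonneg R]
    have : y < ν₁ / Real.sqrt (ν₁ ^ 2 + β⁻¹) / 2 := by
      rw [div_div, lt_div_iff₀ (by positivity)]
      linarith [hkey]
    linarith
  have hord : ν₀ < ν₁ := by
    by_contra hcon
    push_neg at hcon
    have := Hf_mono hβ hβ1 hν₁.le hcon
    linarith
  have hivt := intermediate_value_Icc hord.le ((Hf_cont_nu hβ hβ1).continuousOn)
  have hymem : y ∈ Set.Icc (Hf ν₀ β) (Hf ν₁ β) := ⟨hlow.le, hhigh.le⟩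
  obtain ⟨ν, hνmem, hνeq⟩ := hivt hymem
  exact ⟨ν, lt_of_lt_of_le hν₀ hνmem.1, hνeq⟩

lemma solution_unique {β y ν ν' : ℝ} (hβ : 0 < β) (hβ1 : β < 1) (hν : 0 < ν) (hν' : 0 < ν')
    (h1 : Hf ν β = y) (h2 : Hf ν' β = y) : ν = ν' := by
  rcases lt_trichotomy ν ν' with h | h | h
  · exact absurd (h1.trans h2.symm) (Hf_strict_mono hβ hβ1 hν h).ne
  · exact h
  · exact absurd (h2.trans h1.symm) (Hf_strict_mono hβ hβ1 hν' h).ne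

lemma nuC_eval {ν β : ℝ} (hν : 0 < ν) (hβ : 0 < β) (hβ1 : β < 1) :
    nuC (ν ^ 2 + β⁻¹) (ν ^ 2 + β) = ν := by
  have hββ : β * β⁻¹ = 1 := mul_inv_cancel₀ hβ.ne'
  have h4 : 4 + ((ν ^ 2 + β⁻¹) - (ν ^ 2 + β)) ^ 2 = (β⁻¹ + β) ^ 2 := by
    have : (ν ^ 2 + β⁻¹) - (ν ^ 2 + β) = β⁻¹ - β := by ring
    rw [this]
    nlinarith [hββ]
  unfold nuC
  rw [h4, Real.sqrt_sq (by positivity)]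
  have : (ν ^ 2 + β⁻¹ + (ν ^ 2 + β) - (β⁻¹ + β)) / 2 = ν ^ 2 := by ring
  rw [this, Real.sqrt_sq hν.le]

lemma key_id {ν β : ℝ} (hν : 0 < ν) (hβ : 0 < β) (hβ1 : β < 1) :
    Phi2 (ν ^ 2 + β⁻¹) (ν ^ 2 + β) = Hf ν β := by
  have hββ : β * β⁻¹ = 1 := mul_inv_cancel₀ hβ.ne'
  set a := ν ^ 2 + β⁻¹ with hadef
  set b := ν ^ 2 + β with hbdef
  have hβi : 0 < β⁻¹ := inv_pos.mpr hβ
  have ha : 0 < a := by positivity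
  have hsa : 0 < Real.sqrt a := Real.sqrt_pos.mpr ha
  have hnu : nuC a b = ν := nuC_eval hν hβ hβ1
  have hab : a - b = β⁻¹ - β := by rw [hadef, hbdef]; ring
  have haν : a - ν ^ 2 = β⁻¹ := by rw [hadef]; ring
  have hptwise : ∀ t : ℝ,
      1 / ((1 - (a - b) / (a - ν ^ 2) * Real.sin t ^ 2) *
        Real.sqrt (1 - (a - b) / a * Real.sin t ^ 2)) =
      (Real.sqrt a / (β * ν)) * Jf ν β t := by
    intro t
    have hpy := Real.sin_sq_add_cos_sq t
    have he := eF_pos hβ hβ1 t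
    have hst := sqrt_term_pos (ν := ν) hβ hβ1 t
    have h1 : 1 - (a - b) / (a - ν ^ 2) * Real.sin t ^ 2 = β * eF β t := by
      rw [hab, haν]
      unfold eF
      field_simp
      nlinarith [hpy]
    have h2 : 1 - (a - b) / a * Real.sin t ^ 2 = (ν ^ 2 + eF β t) / a := by
      rw [hab, eq_div_iff ha.ne']
      have hexp : (1 - (β⁻¹ - β) / a * Real.sin t ^ 2) * a = a - (β⁻¹ - β) * Real.sin t ^ 2 := by
        field_simp
      rw [hexp, hadef]
      unfold eF
      linear_combination (-β⁻¹) * hpy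
    have h3 : Real.sqrt ((ν ^ 2 + eF β t) / a) = Real.sqrt (ν ^ 2 + eF β t) / Real.sqrt a := by
      rw [Real.sqrt_div (by positivity)]
    have hν' : ν ≠ 0 := hν.ne'
    have hβ' : β ≠ 0 := hβ.ne'
    have he' : eF β t ≠ 0 := he.ne'
    have hst' : Real.sqrt (ν ^ 2 + eF β t) ≠ 0 := hst.ne'
    have hsa' : Real.sqrt a ≠ 0 := hsa.ne'
    rw [h1, h2, h3]
    unfold Jf
    field_simp
  unfold Phi2 ellPi
  rw [hnu]
  rw [intervalIntegral.integral_congr (g := fun t => (Real.sqrt a / (β * ν)) * Jf ν β t)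
    (fun t _ => hptwise t)]
  rw [intervalIntegral.integral_const_mul, haν]
  unfold Hf
  have hπ : (0:ℝ) < π := Real.pi_pos
  field_simp

lemma mem_sigma_of {ν β : ℝ} (hν : 0 < ν) (hβ : 0 < β) (hβ1 : β < 1) :
    ((ν ^ 2 + β⁻¹, ν ^ 2 + β) : ℝ × ℝ) ∈ SigmaSet := by
  have hββ : β * β⁻¹ = 1 := mul_inv_cancel₀ hβ.ne'
  have hβi := beta_le_inv hβ hβ1
  constructor
  · simp only [gt_iff_lt]
    nlinarith [hββ]
  · simp only [gt_iff_lt]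
    have hβipos : 0 < β⁻¹ := inv_pos.mpr hβ
    nlinarith [sq_nonneg ν, mul_pos hν hν]

lemma repr_of_mem {a b : ℝ} (hmem : (a, b) ∈ SigmaSet) (hpos : 0 < Phi2 a b) :
    ∃ ν β : ℝ, 0 < ν ∧ 0 < β ∧ β < 1 ∧ a = ν ^ 2 + β⁻¹ ∧ b = ν ^ 2 + β := by
  obtain ⟨hab, hab1⟩ := hmem
  simp only [gt_iff_lt] at hab hab1
  -- first, a > 0
  have ha : 0 < a := by
    by_contra hcon
    push_neg at hcon
    have hb : b < 0 := by nlinarith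
    have ha' : a < 0 := by nlinarith
    have hnu0 : nuC a b = 0 := by
      unfold nuC
      rw [Real.sqrt_eq_zero']
      have := Real.sqrt_nonneg (4 + (a - b) ^ 2)
      linarith
    rw [Phi2, hnu0] at hpos
    simp at hpos
  have hb : 0 < b := by nlinarith
  set s := Real.sqrt (4 + (a - b) ^ 2) with hsdef
  have hs0 : 0 ≤ s := Real.sqrt_nonneg _
  have hs2 : s ^ 2 = 4 + (a - b) ^ 2 := Real.sq_sqrt (by positivity)
  have hslt : s < a + b := by
    apply lt_of_pow_lt_pow_left₀ 2 (by positivity)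
    nlinarith
  have hsgt : a - b < s := by
    nlinarith
  set ν := nuC a b with hνdef
  have hν2 : ν ^ 2 = (a + b - s) / 2 := by
    rw [hνdef]
    unfold nuC
    rw [← hsdef, Real.sq_sqrt (by linarith)]
  have hν : 0 < ν := by
    rw [hνdef]
    unfold nuC
    rw [← hsdef]
    apply Real.sqrt_pos.mpr
    linarith
  set β := b - ν ^ 2 with hβdef
  have hβ : 0 < β := by rw [hβdef, hν2]; linarith
  have hβ1 : β < 1 := by
    rw [hβdef, hν2]
    have : s < 2 + (a - b) := by
      apply lt_of_pow_lt_pow_left₀ 2 (by linarith)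
      nlinarith
    linarith
  have hprod : (a - ν ^ 2) * (b - ν ^ 2) = 1 := by
    rw [hν2]
    linear_combination (1/4 : ℝ) * hs2
  have haeq : a = ν ^ 2 + β⁻¹ := by
    have : a - ν ^ 2 = β⁻¹ :=
      eq_inv_of_mul_eq_one_right (by rw [hβdef, mul_comm]; exact hprod)
    linarith
  exact ⟨ν, β, hν, hβ, hβ1, haeq, by rw [hβdef]; ring⟩

/-- For every `(x, y) ∈ Ω̃`, the level set `{(a,b) ∈ Σ : Φ₂(a,b) = y}` is a connected
subset of `ℝ²`. -/
theorem stmt_15 (x y : ℝ) (h : (x, y) ∈ OmegaSet) :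
    IsConnected {p : ℝ × ℝ | p ∈ SigmaSet ∧ Phi2 p.1 p.2 = y} := by
  obtain ⟨hx1, hx2, hxy, hy⟩ := h
  simp only [gt_iff_lt] at hy
  have hy2 : y < 1 / 2 := by nlinarith
  -- the solution function
  have hex : ∀ β : ℝ, β ∈ Set.Ioo (0:ℝ) 1 → ∃ ν, 0 < ν ∧ Hf ν β = y :=
    fun β hβ => exists_solution hβ.1 hβ.2 hy hy2
  choose! g hgpos hgeq using hex
  -- continuity of g on Ioo 0 1
  have hgcont : ContinuousOn g (Set.Ioo 0 1) := by
    intro β₀ hβ₀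
    have hν₀pos := hgpos β₀ hβ₀
    have hν₀eq := hgeq β₀ hβ₀
    rw [ContinuousWithinAt, Metric.tendsto_nhds]
    intro ε hε
    set ε' := min (ε / 2) (g β₀ / 2) with hε'def
    have hε' : 0 < ε' := by
      apply lt_min (by linarith) (by linarith)
    have hlo : Hf (g β₀ - ε') β₀ < y := by
      rw [← hν₀eq]
      apply Hf_strict_mono hβ₀.1 hβ₀.2 _ (by linarith)
      have : ε' ≤ g β₀ / 2 := min_le_right _ _
      linarith
    have hhi : y < Hf (g β₀ + ε') β₀ := by
      rw [← hν₀eq]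
      exact Hf_strict_mono hβ₀.1 hβ₀.2 hν₀pos (by linarith)
    have hev1 : ∀ᶠ β in nhdsWithin β₀ (Set.Ioo 0 1), Hf (g β₀ - ε') β < y :=
      ((Hf_contOn_beta (g β₀ - ε') β₀ hβ₀).eventually_lt_const hlo)
    have hev2 : ∀ᶠ β in nhdsWithin β₀ (Set.Ioo 0 1), y < Hf (g β₀ + ε') β :=
      ((Hf_contOn_beta (g β₀ + ε') β₀ hβ₀).eventually_const_lt hhi)
    have hev3 : ∀ᶠ β in nhdsWithin β₀ (Set.Ioo 0 1), β ∈ Set.Ioo (0:ℝ) 1 :=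
      self_mem_nhdsWithin
    filter_upwards [hev1, hev2, hev3] with β h1 h2 h3
    have hgb : 0 < g β := hgpos β h3
    have hgbeq : Hf (g β) β = y := hgeq β h3
    have hup : g β < g β₀ + ε' := by
      by_contra hcon
      push_neg at hcon
      have := Hf_mono h3.1 h3.2 (by linarith : (0:ℝ) ≤ g β₀ + ε') hcon
      rw [hgbeq] at this
      linarith
    have hdown : g β₀ - ε' < g β := by
      by_contra hcon
      push_neg at hcon
      have := Hf_mono h3.1 h3.2 hgb.le hcon
      rw [hgbeq] at this
      linarith
    rw [Real.dist_eq, abs_lt]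
    have : ε' ≤ ε / 2 := min_le_left _ _
    constructor <;> [linarith; linarith]
  -- level set is the image of the graph
  have hset : {p : ℝ × ℝ | p ∈ SigmaSet ∧ Phi2 p.1 p.2 = y} =
      (fun β => ((g β) ^ 2 + β⁻¹, (g β) ^ 2 + β)) '' (Set.Ioo 0 1) := by
    ext p
    constructor
    · rintro ⟨hmem, heq⟩
      have hpos : 0 < Phi2 p.1 p.2 := by rw [heq]; exact hy
      obtain ⟨ν, β, hν, hβ, hβ1, ha, hb⟩ := repr_of_mem hmem hpos
      have hkey : Hf ν β = y := by
        rw [← heq, ha, hb, key_id hν hβ hβ1]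
      have hνg : ν = g β :=
        solution_unique hβ hβ1 hν (hgpos β ⟨hβ, hβ1⟩) hkey (hgeq β ⟨hβ, hβ1⟩)
      refine ⟨β, ⟨hβ, hβ1⟩, ?_⟩
      simp only
      rw [← hνg]
      exact (Prod.ext ha hb).symm
    · rintro ⟨β, hβmem, rfl⟩
      refine ⟨mem_sigma_of (hgpos β hβmem) hβmem.1 hβmem.2, ?_⟩
      simp only
      rw [key_id (hgpos β hβmem) hβmem.1 hβmem.2]
      exact hgeq β hβmem
  rw [hset]
  apply IsConnected.image (isConnected_Ioo (by norm_num))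
  apply ContinuousOn.prodMk
  · exact ((hgcont.pow 2).add (continuousOn_id.inv₀ fun β hβ => hβ.1.ne'))
  · exact (hgcont.pow 2).add continuousOn_id
end
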